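/- arXiv:1705.00216 — 9 statements merged into one kernel-verified Lean document; each statement's English description precedes it below -/
import Mathlib

section
/- For any positive integer k there exists a tree T with τ(T) - γ_t(T) = k, where γ_t is the total domination number and τ is the vertex cover number. -/
open SimpleGraph

/-- `D` is a total dominating set of `G`: every vertex has a neighbor in `D`. -/
def IsTotalDomSet {V : Type*} (G : SimpleGraph V) (D : Finset V) : Prop :=
  ∀ v : V, ∃ u ∈ D, G.Adj v u

/-- `X` is a vertex cover of `G`: every edge has an endpoint in `X`. -/
def IsVertexCover {V : Type*} (G : SimpleGraph V) (X : Finset V) : Prop :=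
  ∀ ⦃a b : V⦄, G.Adj a b → a ∈ X ∨ b ∈ X

/-- The total domination number `γ_t(G)`. -/
noncomputable def gammaT {V : Type*} (G : SimpleGraph V) : ℕ :=
  sInf {n | ∃ D : Finset V, IsTotalDomSet G D ∧ D.card = n}

/-- The vertex cover number `τ(G)`. -/
noncomputable def tau {V : Type*} (G : SimpleGraph V) : ℕ :=
  sInf {n | ∃ X : Finset V, _root_.IsVertexCover G X ∧ X.card = n}

/-- A `(γ_t-τ)`-set: simultaneously a minimum total dominating set and a
minimum vertex cover. -/
def IsGttSet {V : Type*} (G : SimpleGraph V) (D : Finset V) : Prop :=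
  IsTotalDomSet G D ∧ _root_.IsVertexCover G D ∧ D.card = gammaT G ∧ D.card = tau G

/-- The sum `G +_{uv} H`: the disjoint union of `G` and `H` with the extra edge `uv`. -/
def graphSum {α β : Type*} (G : SimpleGraph α) (H : SimpleGraph β) (u : α) (v : β) :
    SimpleGraph (α ⊕ β) :=
  SimpleGraph.fromRel (fun x y =>
    (∃ a b, x = Sum.inl a ∧ y = Sum.inl b ∧ G.Adj a b) ∨
    (∃ a b, x = Sum.inr a ∧ y = Sum.inr b ∧ H.Adj a b) ∨
    (x = Sum.inl u ∧ y = Sum.inr v))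

/-- The private neighborhood `pn(u,S) = {w : N(w) ∩ S = {u}}`. -/
def pn {V : Type*} (G : SimpleGraph V) (S : Finset V) (u : V) : Set V :=
  {w | G.neighborSet w ∩ ↑S = {u}}

/-- `v` is quasi-isolated: for some minimum total dominating set `S` there is
`u ∈ S` with `pn(u,S) = {v}`. -/
def QuasiIsolated {V : Type*} (G : SimpleGraph V) (v : V) : Prop :=
  ∃ S : Finset V, IsTotalDomSet G S ∧ S.card = gammaT G ∧ ∃ u ∈ S, pn G S u = {v}

/-- An end vertex: a vertex of degree 1. -/
def IsEndVertex {V : Type*} (G : SimpleGraph V) (v : V) : Prop :=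
  (G.neighborSet v).ncard = 1


/-! ### Auxiliary construction -/

/-- Parent function for our tree construction. -/
def par (v : ℕ) : ℕ := if v % 6 = 2 then v - 2 else if v % 6 = 4 then v - 4 else v - 1

lemma par_lt {v : ℕ} (h : v ≠ 0) : par v < v := by unfold par; split_ifs <;> omega

/-- The tree on `Fin n` where each nonzero vertex is joined to its parent. -/
def myT (n : ℕ) : SimpleGraph (Fin n) where
  Adj a b := (b.val ≠ 0 ∧ a.val = par b.val) ∨ (a.val ≠ 0 ∧ b.val = par a.val)
  symm := ⟨fun a b h => h.symm⟩
  loopless := ⟨by rintro a (⟨h1, h2⟩ | ⟨h1, h2⟩) <;> have := par_lt h1 <;> omega⟩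

lemma myT_adj {n : ℕ} {a b : Fin n} :
    (myT n).Adj a b ↔ (b.val ≠ 0 ∧ a.val = par b.val) ∨ (a.val ≠ 0 ∧ b.val = par a.val) :=
  Iff.rfl

lemma last_edge {V : Type*} {G : SimpleGraph V} {b m : V} (q : G.Walk b m) (hbm : b ≠ m) :
    ∃ u, G.Adj u m ∧ s(u, m) ∈ q.edges ∧ u ∈ q.support := by
  induction q with
  | nil => exact absurd rfl hbm
  | @cons b c m h q' ih =>
      by_cases hcm : c = m
      · subst hcm
        exact ⟨b, h, by simp, by simp⟩
      · obtain ⟨u, h1, h2, h3⟩ := ih hcm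
        exact ⟨u, h1, by simp [h2], by simp [h3]⟩

lemma myT_acyclic (n : ℕ) : (myT n).IsAcyclic := by
  intro v c hc
  classical
  have hvmem : v ∈ c.support.toFinset := List.mem_toFinset.mpr c.start_mem_support
  have hsne : c.support.toFinset.Nonempty := ⟨v, hvmem⟩
  set M := c.support.toFinset.max' hsne with hMdef
  have hM : M ∈ c.support := List.mem_toFinset.mp (c.support.toFinset.max'_mem hsne)
  have hbound : ∀ x ∈ c.support, x ≤ M := fun x hx =>
    c.support.toFinset.le_max' x (List.mem_toFinset.mpr hx)
  have hc' := hc.rotate hM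
  have htail : ∀ x ∈ (c.rotate M hM).support.tail, x ≤ M := by
    intro x hx
    have hrot := SimpleGraph.Walk.support_rotate c M hM
    exact hbound x (List.mem_of_mem_tail (hrot.mem_iff.mp hx))
  have key : ∀ x : Fin n, (myT n).Adj x M → x < M → x.val = par M.val := by
    rintro x (⟨h1, h2⟩ | ⟨h1, h2⟩) hlt
    · exact h2
    · exfalso
      have h3 := par_lt h1
      have h4 : x.val < M.val := hlt
      omega
  cases hw : c.rotate M hM with
  | nil =>
      rw [hw] at hc'
      exact SimpleGraph.Walk.IsCycle.not_of_nil hc'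
  | @cons _ b _ h q =>
      rw [hw] at hc' htail
      rw [SimpleGraph.Walk.cons_isCycle_iff] at hc'
      obtain ⟨hq, hedge⟩ := hc'
      have hbM : b ≠ M := fun hbm => (myT n).loopless.irrefl M (hbm ▸ h)
      obtain ⟨u, hadj, hmem, humem⟩ := last_edge q hbM
      have hqsupp : ∀ x ∈ q.support, x ≤ M := by
        intro x hx
        apply htail
        rw [SimpleGraph.Walk.support_cons]
        exact hx
      have huM : u ≠ M := fun huMeq => (myT n).loopless.irrefl M (huMeq ▸ hadj)
      have hu : u.val = par M.val := key u hadj (lt_of_le_of_ne (hqsupp u humem) huM)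
      have hb : b.val = par M.val :=
        key b h.symm (lt_of_le_of_ne (hqsupp b q.start_mem_support) hbM)
      have hub : u = b := Fin.ext (hu.trans hb.symm)
      apply hedge
      rw [show s(M, b) = s(u, M) by rw [hub]; exact Sym2.eq_swap]
      exact hmem

lemma myT_reach {n : ℕ} (hn : 0 < n) :
    ∀ (m : ℕ) (hm : m < n), (myT n).Reachable ⟨m, hm⟩ ⟨0, hn⟩ := by
  intro m
  induction m using Nat.strong_induction_on with
  | _ m ih =>
      intro hm
      rcases eq_or_ne m 0 with rfl | h0
      · exact SimpleGraph.Reachable.refl _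
      · have hp : par m < m := par_lt h0
        have hadj : (myT n).Adj ⟨m, hm⟩ ⟨par m, lt_trans hp hm⟩ := Or.inr ⟨h0, rfl⟩
        exact hadj.reachable.trans (ih (par m) hp (lt_trans hp hm))

lemma myT_connected {n : ℕ} (hn : 0 < n) : (myT n).Connected := by
  have : Nonempty (Fin n) := ⟨⟨0, hn⟩⟩
  refine SimpleGraph.Connected.mk ?_
  intro u v
  exact (myT_reach hn u.val u.isLt).trans (myT_reach hn v.val v.isLt).symm

lemma myT_isTree {n : ℕ} (hn : 0 < n) : (myT n).IsTree :=
  ⟨myT_connected hn, myT_acyclic n⟩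

/-- For any positive integer `k` there exists a tree `T` with `τ(T) - γ_t(T) = k`. -/
theorem stmt0 (k : ℕ) (hk : 0 < k) :
    ∃ (n : ℕ) (T : SimpleGraph (Fin n)), T.IsTree ∧ tau T = gammaT T + k := by
  classical
  refine ⟨6 * k + 4, myT (6 * k + 4), myT_isTree (by omega), ?_⟩
  set n := 6 * k + 4 with hn
  -- the vertex cover: all even vertices
  set X : Finset (Fin n) :=
    Finset.image (fun j : Fin (3 * k + 2) => (⟨2 * j.val, by have := j.isLt; omega⟩ : Fin n))
      Finset.univ with hXdef
  have hXmem : ∀ v : Fin n, v ∈ X ↔ v.val % 2 = 0 := by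
    intro v
    constructor
    · intro hv
      obtain ⟨j, _, hj⟩ := Finset.mem_image.mp hv
      have := congrArg Fin.val hj
      simp only at this
      omega
    · intro hv
      refine Finset.mem_image.mpr ⟨⟨v.val / 2, by have := v.isLt; omega⟩, Finset.mem_univ _, ?_⟩
      apply Fin.ext
      have := v.isLt
      simp only
      omega
  have hXcard : X.card = 3 * k + 2 := by
    rw [hXdef, Finset.card_image_of_injective _ ?_, Finset.card_univ, Fintype.card_fin]
    intro a b hab
    have := congrArg Fin.val hab
    simp only at this
    exact Fin.ext (by omega)
  have hXcover : _root_.IsVertexCover (myT n) X := by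
    rintro a b (⟨h1, h2⟩ | ⟨h1, h2⟩)
    · have : a.val % 2 = 0 ∨ b.val % 2 = 0 := by
        unfold par at h2; split_ifs at h2 <;> omega
      rcases this with h | h
      · exact Or.inl ((hXmem a).mpr h)
      · exact Or.inr ((hXmem b).mpr h)
    · have : b.val % 2 = 0 ∨ a.val % 2 = 0 := by
        unfold par at h2; split_ifs at h2 <;> omega
      rcases this with h | h
      · exact Or.inr ((hXmem b).mpr h)
      · exact Or.inl ((hXmem a).mpr h)
  -- lower bound for vertex covers via the perfect matching (2j, 2j+1)
  have hlowerX : ∀ Y : Finset (Fin n), _root_.IsVertexCover (myT n) Y → 3 * k + 2 ≤ Y.card := by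
    intro Y hY
    have hlt1 : ∀ j : Fin (3 * k + 2), 2 * j.val < n := fun j => by have := j.isLt; omega
    have hlt2 : ∀ j : Fin (3 * k + 2), 2 * j.val + 1 < n := fun j => by have := j.isLt; omega
    have hedge : ∀ j : Fin (3 * k + 2),
        (myT n).Adj ⟨2 * j.val, hlt1 j⟩ ⟨2 * j.val + 1, hlt2 j⟩ := by
      intro j
      refine Or.inl ⟨by simp, ?_⟩
      show 2 * j.val = par (2 * j.val + 1)
      unfold par; split_ifs <;> omega
    set g : Fin (3 * k + 2) → Fin n := fun j =>
      if (⟨2 * j.val, hlt1 j⟩ : Fin n) ∈ Y then ⟨2 * j.val, hlt1 j⟩ else ⟨2 * j.val + 1, hlt2 j⟩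
      with hgdef
    have hgY : ∀ j, g j ∈ Y := by
      intro j
      rw [hgdef]
      dsimp only
      split_ifs with hj
      · exact hj
      · rcases hY (hedge j) with h | h
        · exact absurd h hj
        · exact h
    have hgval : ∀ j, (g j).val = 2 * j.val ∨ (g j).val = 2 * j.val + 1 := by
      intro j
      rw [hgdef]
      dsimp only
      split_ifs <;> simp
    have hginj : ∀ a ∈ (Finset.univ : Finset (Fin (3 * k + 2))), ∀ b ∈ Finset.univ,
        g a = g b → a = b := by
      intro a _ b _ hab
      have hv := congrArg Fin.val hab
      rcases hgval a with h | h <;> rcases hgval b with h' | h' <;>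
        exact Fin.ext (by omega)
    calc 3 * k + 2 = (Finset.univ : Finset (Fin (3 * k + 2))).card := by
            rw [Finset.card_univ, Fintype.card_fin]
      _ ≤ Y.card := Finset.card_le_card_of_injOn g (fun j _ => hgY j) hginj
  -- the total dominating set: vertices ≡ 0 or 2 mod 6
  set D : Finset (Fin n) :=
    Finset.image (fun p : Fin (k + 1) × Fin 2 =>
      (⟨6 * p.1.val + 2 * p.2.val, by have := p.1.isLt; have := p.2.isLt; omega⟩ : Fin n))
      Finset.univ with hDdef
  have hDmem : ∀ v : Fin n, v ∈ D ↔ v.val % 6 = 0 ∨ v.val % 6 = 2 := by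
    intro v
    constructor
    · intro hv
      obtain ⟨p, _, hp⟩ := Finset.mem_image.mp hv
      have := congrArg Fin.val hp
      have h2 := p.2.isLt
      simp only at this
      omega
    · intro hv
      refine Finset.mem_image.mpr
        ⟨(⟨v.val / 6, by have := v.isLt; omega⟩, ⟨(v.val % 6) / 2, by omega⟩),
          Finset.mem_univ _, ?_⟩
      apply Fin.ext
      simp only
      omega
  have hDcard : D.card = 2 * k + 2 := by
    rw [hDdef, Finset.card_image_of_injective _ ?_, Finset.card_univ, Fintype.card_prod,
      Fintype.card_fin, Fintype.card_fin]
    · ring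
    · intro a b hab
      have hv := congrArg Fin.val hab
      have ha2 := a.2.isLt
      have hb2 := b.2.isLt
      simp only at hv
      have h1 : a.1.val = b.1.val := by omega
      have h2 : a.2.val = b.2.val := by omega
      exact Prod.ext (Fin.ext h1) (Fin.ext h2)
  have hDdom : IsTotalDomSet (myT n) D := by
    intro v
    have hv := v.isLt
    have h6 : v.val % 6 = 0 ∨ v.val % 6 = 1 ∨ v.val % 6 = 2 ∨ v.val % 6 = 3 ∨
        v.val % 6 = 4 ∨ v.val % 6 = 5 := by omega
    rcases h6 with h | h | h | h | h | h
    · -- neighbor v+2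
      refine ⟨⟨v.val + 2, by omega⟩, (hDmem _).mpr (by simp; omega), Or.inl ⟨by simp, ?_⟩⟩
      show v.val = par (v.val + 2)
      unfold par; split_ifs <;> omega
    · refine ⟨⟨v.val - 1, by omega⟩, (hDmem _).mpr (by simp; omega), Or.inr ⟨by omega, ?_⟩⟩
      show (v.val - 1 : ℕ) = par v.val
      unfold par; split_ifs <;> omega
    · refine ⟨⟨v.val - 2, by omega⟩, (hDmem _).mpr (by simp; omega), Or.inr ⟨by omega, ?_⟩⟩
      show (v.val - 2 : ℕ) = par v.val
      unfold par; split_ifs <;> omega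
    · refine ⟨⟨v.val - 1, by omega⟩, (hDmem _).mpr (by simp; omega), Or.inr ⟨by omega, ?_⟩⟩
      show (v.val - 1 : ℕ) = par v.val
      unfold par; split_ifs <;> omega
    · refine ⟨⟨v.val - 4, by omega⟩, (hDmem _).mpr (by simp; omega), Or.inr ⟨by omega, ?_⟩⟩
      show (v.val - 4 : ℕ) = par v.val
      unfold par; split_ifs <;> omega
    · -- neighbor v+1 (a center ≡ 0 mod 6)
      refine ⟨⟨v.val + 1, by omega⟩, (hDmem _).mpr (by simp; omega), Or.inl ⟨by simp, ?_⟩⟩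
      show v.val = par (v.val + 1)
      unfold par; split_ifs <;> omega
  -- lower bound for total dominating sets: D is forced
  have hlowerD : ∀ E : Finset (Fin n), IsTotalDomSet (myT n) E → 2 * k + 2 ≤ E.card := by
    intro E hE
    have hsub : D ⊆ E := by
      intro v hvD
      have hv := v.isLt
      rcases (hDmem v).mp hvD with h | h
      · -- leaf v+1 has unique neighbor v
        obtain ⟨u, huE, hadj⟩ := hE ⟨v.val + 1, by omega⟩
        have : u = v := by
          rcases hadj with ⟨h1, h2⟩ | ⟨h1, h2⟩
          · exfalso
            simp only at h2
            unfold par at h2; split_ifs at h2 <;> omega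
          · apply Fin.ext
            simp only at h2
            unfold par at h2; split_ifs at h2 <;> omega
        exact this ▸ huE
      · -- leaf v+1 has unique neighbor v
        obtain ⟨u, huE, hadj⟩ := hE ⟨v.val + 1, by omega⟩
        have : u = v := by
          rcases hadj with ⟨h1, h2⟩ | ⟨h1, h2⟩
          · exfalso
            simp only at h2
            unfold par at h2; split_ifs at h2 <;> omega
          · apply Fin.ext
            simp only at h2
            unfold par at h2; split_ifs at h2 <;> omega
        exact this ▸ huE
    calc 2 * k + 2 = D.card := hDcard.symm
      _ ≤ E.card := Finset.card_le_card hsub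
  have htau : tau (myT n) = 3 * k + 2 := by
    have hmem : (3 * k + 2) ∈ {m | ∃ X : Finset (Fin n), _root_.IsVertexCover (myT n) X ∧ X.card = m} :=
      ⟨X, hXcover, hXcard⟩
    refine le_antisymm (Nat.sInf_le hmem) ?_
    obtain ⟨Y, hY, hYc⟩ := Nat.sInf_mem (⟨3 * k + 2, hmem⟩ :
      Set.Nonempty {m | ∃ X : Finset (Fin n), _root_.IsVertexCover (myT n) X ∧ X.card = m})
    rw [tau, ← hYc]
    exact hlowerX Y hY
  have hgt : gammaT (myT n) = 2 * k + 2 := by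
    have hmem : (2 * k + 2) ∈ {m | ∃ D : Finset (Fin n), IsTotalDomSet (myT n) D ∧ D.card = m} :=
      ⟨D, hDdom, hDcard⟩
    refine le_antisymm (Nat.sInf_le hmem) ?_
    obtain ⟨E, hEd, hEc⟩ := Nat.sInf_mem (⟨2 * k + 2, hmem⟩ :
      Set.Nonempty {m | ∃ D : Finset (Fin n), IsTotalDomSet (myT n) D ∧ D.card = m})
    rw [gammaT, ← hEc]
    exact hlowerD E hEd
  rw [htau, hgt]
  omega
end

section
/- For any positive integer k there exists a tree T with γ_t(T) - τ(T) = k. -/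
open SimpleGraph

namespace Stmt1Aux

/-- parent function -/
def p (j : ℕ) : ℕ := if j % 3 = 1 then 0 else j - 1

lemma p_spec (j : ℕ) : (j % 3 = 1 ∧ p j = 0) ∨ (j % 3 ≠ 1 ∧ p j = j - 1) := by
  unfold p; split <;> simp_all

lemma p_lt {j : ℕ} (h : j ≠ 0) : p j < j := by unfold p; split <;> omega

/-- the spider graph on `Fin n` -/
def T (n : ℕ) : SimpleGraph (Fin n) :=
  SimpleGraph.fromRel (fun a b => (a : ℕ) ≠ 0 ∧ (b : ℕ) = p a)

lemma adj_iff {n : ℕ} {a b : Fin n} :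
    (T n).Adj a b ↔ ((a:ℕ) ≠ 0 ∧ (b:ℕ) = p (a:ℕ)) ∨ ((b:ℕ) ≠ 0 ∧ (a:ℕ) = p (b:ℕ)) := by
  constructor
  · rintro ⟨hne, h | h⟩
    · exact Or.inl h
    · exact Or.inr h
  · intro h
    refine ⟨?_, by tauto⟩
    rintro rfl
    rcases h with ⟨h0, hp⟩ | ⟨h0, hp⟩ <;>
      · have := p_lt h0; omega

lemma reach {n : ℕ} (hn : 0 < n) (v : Fin n) : (T n).Reachable v ⟨0, hn⟩ := by
  obtain ⟨v, hv⟩ := v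
  induction v using Nat.strong_induction_on with
  | _ v ih =>
    rcases eq_or_ne v 0 with rfl | h0
    · rfl
    · have hp : p v < n := lt_trans (p_lt h0) hv
      have hadj : (T n).Adj ⟨v, hv⟩ ⟨p v, hp⟩ := adj_iff.mpr (Or.inl ⟨h0, rfl⟩)
      exact hadj.reachable.trans (ih (p v) (p_lt h0) hp)

lemma connected {n : ℕ} (hn : 0 < n) : (T n).Connected := by
  have : Nonempty (Fin n) := ⟨⟨0, hn⟩⟩
  exact ⟨fun u v => (reach hn u).trans (reach hn v).symm⟩

lemma not_reachable_of_closed {V : Type*} {G : SimpleGraph V} (S : Set V) {u v : V}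
    (hu : u ∈ S) (hv : v ∉ S) (h : ∀ ⦃a b : V⦄, G.Adj a b → a ∈ S → b ∈ S) :
    ¬ G.Reachable u v := by
  rintro ⟨w⟩
  obtain ⟨d, _, h1, h2⟩ := w.exists_boundary_dart S hu hv
  exact h2 (h d.adj h1)

lemma acyclic (n : ℕ) : (T n).IsAcyclic := by
  rw [isAcyclic_iff_forall_adj_isBridge]
  -- first一个 helper: for child-parent orientation
  have key : ∀ a b : Fin n, (a:ℕ) ≠ 0 → (b:ℕ) = p (a:ℕ) →
      ¬ ((T n) \ fromEdgeSet {s(a, b)}).Reachable a b := by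
    intro a b ha hb
    set S : Set (Fin n) := {w | (a:ℕ) ≤ (w:ℕ) ∧ ((w:ℕ) - 1) / 3 = ((a:ℕ) - 1) / 3} with hS
    have haS : a ∈ S := ⟨le_refl _, rfl⟩
    have hbS : b ∉ S := by
      rintro ⟨h1, -⟩
      have := p_lt ha
      omega
    refine not_reachable_of_closed S haS hbS ?_
    rintro x y ⟨hxy, hne⟩ hxS
    have hxyne : x ≠ y := hxy.ne
    rw [adj_iff] at hxy
    have hne2 : s(x, y) ≠ s(a, b) := by
      intro h
      rw [fromEdgeSet_adj] at hne
      push_neg at hne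
      exact hxyne (hne (by simp [h]))
    have hne' : ¬((x = a ∧ y = b) ∨ (x = b ∧ y = a)) := by
      rintro (⟨rfl, rfl⟩ | ⟨rfl, rfl⟩)
      · exact hne2 rfl
      · exact hne2 (Sym2.eq_swap)
    have hvals : ¬(((x:ℕ) = (a:ℕ) ∧ (y:ℕ) = (b:ℕ)) ∨ ((x:ℕ) = (b:ℕ) ∧ (y:ℕ) = (a:ℕ))) := by
      intro hc
      apply hne'
      rcases hc with ⟨h1, h2⟩ | ⟨h1, h2⟩
      · exact Or.inl ⟨Fin.ext h1, Fin.ext h2⟩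
      · exact Or.inr ⟨Fin.ext h1, Fin.ext h2⟩
    obtain ⟨hxa, hxleg⟩ := hxS
    have hx3 := p_spec (x:ℕ)
    have hy3 := p_spec (y:ℕ)
    have ha3 := p_spec (a:ℕ)
    have hxn : (x:ℕ) < n := x.isLt
    have hyn : (y:ℕ) < n := y.isLt
    refine ⟨?_, ?_⟩ <;>
      rcases hxy with ⟨h0, hp⟩ | ⟨h0, hp⟩ <;> omega
  intro v w hvw
  rw [isBridge_iff]
  rcases adj_iff.mp hvw with ⟨h0, hp⟩ | ⟨h0, hp⟩
  · exact key v w h0 hp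
  · rw [Sym2.eq_swap]
    intro hr
    exact key w v h0 hp hr.symm




lemma card_filter_fin (n : ℕ) (P : ℕ → Prop) [DecidablePred P] :
    (Finset.univ.filter (fun j : Fin n => P j.val)).card
      = ((Finset.range n).filter P).card := by
  rw [Finset.card_filter, Finset.card_filter,
    Fin.sum_univ_eq_sum_range (fun j => if P j then 1 else 0) n]

lemma cnt1 (m : ℕ) :
    (((Finset.range (3*m+1)).filter (fun j => j % 3 = 1 ∨ j % 3 = 2))).card = 2*m := by
  induction m with
  | zero => decide
  | succ m ih =>
    have h : 3*(m+1)+1 = ((3*m+1)+1+1)+1 := by ring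
    rw [h, Finset.range_add_one, Finset.range_add_one, Finset.range_add_one]
    rw [Finset.filter_insert, Finset.filter_insert, Finset.filter_insert]
    have h1 : ¬((3*m+1+1+1) % 3 = 1 ∨ (3*m+1+1+1) % 3 = 2) := by omega
    have h2 : (3*m+1+1) % 3 = 1 ∨ (3*m+1+1) % 3 = 2 := by omega
    have h3 : (3*m+1) % 3 = 1 ∨ (3*m+1) % 3 = 2 := by omega
    rw [if_neg h1, if_pos h2, if_pos h3]
    rw [Finset.card_insert_of_notMem (by simp), Finset.card_insert_of_notMem (by simp), ih]
    ring

lemma cnt2 (m : ℕ) :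
    (((Finset.range (3*m+1)).filter (fun j => j = 0 ∨ j % 3 = 2))).card = m + 1 := by
  induction m with
  | zero => decide
  | succ m ih =>
    have h : 3*(m+1)+1 = ((3*m+1)+1+1)+1 := by ring
    rw [h, Finset.range_add_one, Finset.range_add_one, Finset.range_add_one]
    rw [Finset.filter_insert, Finset.filter_insert, Finset.filter_insert]
    have h1 : ¬((3*m+1+1+1) = 0 ∨ (3*m+1+1+1) % 3 = 2) := by omega
    have h2 : (3*m+1+1) = 0 ∨ (3*m+1+1) % 3 = 2 := by omega
    have h3 : ¬((3*m+1) = 0 ∨ (3*m+1) % 3 = 2) := by omega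
    rw [if_neg h1, if_pos h2, if_neg h3]
    rw [Finset.card_insert_of_notMem (by simp), ih]

/-- generic part-counting lower bound -/
lemma parts_bound {V : Type*} [DecidableEq V] (D : Finset V) (L : ℕ → Finset V) (m c : ℕ)
    (hdisj : ∀ i ∈ Finset.range m, ∀ j ∈ Finset.range m, i ≠ j → Disjoint (L i) (L j))
    (hcard : ∀ i ∈ Finset.range m, c ≤ (D ∩ L i).card) : m * c ≤ D.card := by
  have hsub : (Finset.range m).biUnion (fun i => D ∩ L i) ⊆ D := by
    intro x hx
    simp only [Finset.mem_biUnion, Finset.mem_inter] at hx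
    obtain ⟨i, _, hxD, _⟩ := hx
    exact hxD
  calc m * c = ∑ _i ∈ Finset.range m, c := by simp [mul_comm]
    _ ≤ ∑ i ∈ Finset.range m, (D ∩ L i).card := Finset.sum_le_sum hcard
    _ = ((Finset.range m).biUnion (fun i => D ∩ L i)).card := by
        rw [Finset.card_biUnion]
        intro i hi j hj hij
        exact Finset.disjoint_of_subset_left (Finset.inter_subset_right)
          (Finset.disjoint_of_subset_right (Finset.inter_subset_right) (hdisj i hi j hj hij))
    _ ≤ D.card := Finset.card_le_card hsub



def D0 (n : ℕ) : Finset (Fin n) :=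
  Finset.univ.filter (fun j : Fin n => j.val % 3 = 1 ∨ j.val % 3 = 2)

def X0 (n : ℕ) : Finset (Fin n) :=
  Finset.univ.filter (fun j : Fin n => j.val = 0 ∨ j.val % 3 = 2)

lemma D0_card (m : ℕ) : (D0 (3*m+1)).card = 2*m := by
  unfold D0
  rw [card_filter_fin (3*m+1) (fun t => t % 3 = 1 ∨ t % 3 = 2), cnt1]

lemma X0_card (m : ℕ) : (X0 (3*m+1)).card = m+1 := by
  unfold X0
  rw [card_filter_fin (3*m+1) (fun t => t = 0 ∨ t % 3 = 2), cnt2]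

lemma D0_dom {m : ℕ} (hm : 0 < m) : IsTotalDomSet (T (3*m+1)) (D0 (3*m+1)) := by
  intro v
  have hvl : (v : ℕ) < 3*m+1 := v.isLt
  by_cases h0 : (v : ℕ) = 0
  · refine ⟨⟨1, by omega⟩, ?_, ?_⟩
    · simp [D0]
    · rw [adj_iff]
      right
      refine ⟨by simp, ?_⟩
      have := p_spec 1
      simp only [Fin.val_mk]
      omega
  · by_cases h1 : (v : ℕ) % 3 = 1
    · refine ⟨⟨(v : ℕ) + 1, by omega⟩, ?_, ?_⟩
      · simp only [D0, Finset.mem_filter, Finset.mem_univ, true_and]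
        omega
      · rw [adj_iff]
        right
        refine ⟨by simp, ?_⟩
        have := p_spec ((v : ℕ) + 1)
        simp only []
        omega
    · refine ⟨⟨(v : ℕ) - 1, by omega⟩, ?_, ?_⟩
      · simp only [D0, Finset.mem_filter, Finset.mem_univ, true_and, Fin.val_mk]
        omega
      · rw [adj_iff]
        left
        refine ⟨h0, ?_⟩
        have := p_spec (v : ℕ)
        simp only [Fin.val_mk]
        omega

lemma X0_cover (m : ℕ) : _root_.IsVertexCover (T (3*m+1)) (X0 (3*m+1)) := by
  intro a b hadj
  rw [adj_iff] at hadj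
  have ha := p_spec (a : ℕ)
  have hb := p_spec (b : ℕ)
  simp only [X0, Finset.mem_filter, Finset.mem_univ, true_and]
  rcases hadj with ⟨h0, hp⟩ | ⟨h0, hp⟩ <;> omega

lemma gammaT_lower {m : ℕ} (D : Finset (Fin (3*m+1)))
    (hD : IsTotalDomSet (T (3*m+1)) D) : 2*m ≤ D.card := by
  classical
  set L : ℕ → Finset (Fin (3*m+1)) :=
    fun i => Finset.univ.filter (fun w : Fin (3*m+1) => 3*i+1 ≤ w.val ∧ w.val ≤ 3*i+3) with hL
  have := parts_bound D L m 2 ?_ ?_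
  · omega
  · intro i hi j hj hij
    rw [Finset.disjoint_left]
    intro w hwi hwj
    simp only [hL, Finset.mem_filter] at hwi hwj
    omega
  · intro i hi
    rw [Finset.mem_range] at hi
    have hz : 3*i+3 < 3*m+1 := by omega
    obtain ⟨u, huD, hadj⟩ := hD ⟨3*i+3, hz⟩
    have hu2 : (u : ℕ) = 3*i+2 := by
      rw [adj_iff] at hadj
      have h1 := p_spec (3*i+3)
      have h2 := p_spec (u : ℕ)
      have := u.isLt
      rcases hadj with ⟨h0, hp⟩ | ⟨h0, hp⟩ <;> simp only [Fin.val_mk] at hp <;> omega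
    obtain ⟨w, hwD, hadjw⟩ := hD u
    have hw2 : (w : ℕ) = 3*i+1 ∨ (w : ℕ) = 3*i+3 := by
      rw [adj_iff] at hadjw
      have h2 := p_spec (w : ℕ)
      have h3 := p_spec (u : ℕ)
      have := w.isLt
      rcases hadjw with ⟨h0, hp⟩ | ⟨h0, hp⟩ <;> omega
    have hsub : ({w, u} : Finset (Fin (3*m+1))) ⊆ D ∩ L i := by
      intro x hx
      simp only [Finset.mem_insert, Finset.mem_singleton] at hx
      rcases hx with rfl | rfl <;>
        simp only [Finset.mem_inter, hL, Finset.mem_filter, Finset.mem_univ, true_and] <;>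
        exact ⟨by assumption, by omega⟩
    have hcard2 : ({w, u} : Finset (Fin (3*m+1))).card = 2 := by
      rw [Finset.card_insert_of_notMem, Finset.card_singleton]
      simp only [Finset.mem_singleton]
      intro h
      rw [h] at hw2
      omega
    calc 2 = ({w, u} : Finset (Fin (3*m+1))).card := hcard2.symm
      _ ≤ (D ∩ L i).card := Finset.card_le_card hsub

lemma tau_lower {m : ℕ} (hm : 0 < m) (X : Finset (Fin (3*m+1)))
    (hX : _root_.IsVertexCover (T (3*m+1)) X) : m + 1 ≤ X.card := by
  classical
  set L : ℕ → Finset (Fin (3*m+1)) :=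
    fun i => Finset.univ.filter (fun w : Fin (3*m+1) =>
      (i < m ∧ 3*i+2 ≤ w.val ∧ w.val ≤ 3*i+3) ∨ (i = m ∧ w.val ≤ 1)) with hL
  have := parts_bound X L (m+1) 1 ?_ ?_
  · omega
  · intro i hi j hj hij
    rw [Finset.disjoint_left]
    intro w hwi hwj
    simp only [hL, Finset.mem_filter] at hwi hwj
    omega
  · intro i hi
    rw [Finset.mem_range] at hi
    rcases Nat.lt_or_ge i m with him | him
    · have hz : 3*i+3 < 3*m+1 := by omega
      have hy : 3*i+2 < 3*m+1 := by omega
      have hadj : (T (3*m+1)).Adj ⟨3*i+2, hy⟩ ⟨3*i+3, hz⟩ := by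
        rw [adj_iff]
        right
        refine ⟨by simp, ?_⟩
        have := p_spec (3*i+3)
        simp only [Fin.val_mk]
        omega
      rcases hX hadj with h | h
      · have : (⟨3*i+2, hy⟩ : Fin (3*m+1)) ∈ X ∩ L i := by
          simp only [Finset.mem_inter, hL, Finset.mem_filter, Finset.mem_univ, true_and]
          exact ⟨h, by omega⟩
        exact Finset.card_pos.mpr ⟨_, this⟩
      · have : (⟨3*i+3, hz⟩ : Fin (3*m+1)) ∈ X ∩ L i := by
          simp only [Finset.mem_inter, hL, Finset.mem_filter, Finset.mem_univ, true_and]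
          exact ⟨h, by omega⟩
        exact Finset.card_pos.mpr ⟨_, this⟩
    · have him' : i = m := by omega
      have h1 : (1 : ℕ) < 3*m+1 := by omega
      have h0 : (0 : ℕ) < 3*m+1 := by omega
      have hadj : (T (3*m+1)).Adj ⟨0, h0⟩ ⟨1, h1⟩ := by
        rw [adj_iff]
        right
        refine ⟨by simp, ?_⟩
        have := p_spec 1
        simp only [Fin.val_mk]
        omega
      rcases hX hadj with h | h
      · have : (⟨0, h0⟩ : Fin (3*m+1)) ∈ X ∩ L i := by
          simp only [Finset.mem_inter, hL, Finset.mem_filter, Finset.mem_univ, true_and]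
          exact ⟨h, by omega⟩
        exact Finset.card_pos.mpr ⟨_, this⟩
      · have : (⟨1, h1⟩ : Fin (3*m+1)) ∈ X ∩ L i := by
          simp only [Finset.mem_inter, hL, Finset.mem_filter, Finset.mem_univ, true_and]
          exact ⟨h, by omega⟩
        exact Finset.card_pos.mpr ⟨_, this⟩

lemma gammaT_eq {m : ℕ} (hm : 0 < m) : gammaT (T (3*m+1)) = 2*m := by
  have hmem : 2*m ∈ {t | ∃ D : Finset (Fin (3*m+1)),
      IsTotalDomSet (T (3*m+1)) D ∧ D.card = t} :=
    ⟨D0 _, D0_dom hm, D0_card m⟩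
  refine le_antisymm (Nat.sInf_le hmem) (le_csInf ⟨_, hmem⟩ ?_)
  rintro t ⟨D, hD, rfl⟩
  exact gammaT_lower D hD

lemma tau_eq {m : ℕ} (hm : 0 < m) : tau (T (3*m+1)) = m+1 := by
  have hmem : m+1 ∈ {t | ∃ X : Finset (Fin (3*m+1)),
      _root_.IsVertexCover (T (3*m+1)) X ∧ X.card = t} :=
    ⟨X0 _, X0_cover m, X0_card m⟩
  refine le_antisymm (Nat.sInf_le hmem) (le_csInf ⟨_, hmem⟩ ?_)
  rintro t ⟨X, hX, rfl⟩
  exact tau_lower hm X hX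

end Stmt1Aux

/-- For any positive integer `k` there exists a tree `T` with `γ_t(T) - τ(T) = k`. -/
theorem stmt1 (k : ℕ) (hk : 0 < k) :
    ∃ (n : ℕ) (T : SimpleGraph (Fin n)), T.IsTree ∧ gammaT T = tau T + k := by
  classical
  refine ⟨3*(k+1)+1, Stmt1Aux.T (3*(k+1)+1), ⟨Stmt1Aux.connected (by omega), Stmt1Aux.acyclic _⟩, ?_⟩
  rw [Stmt1Aux.gammaT_eq (by omega), Stmt1Aux.tau_eq (by omega)]
  omega
end

section
/- If G is a connected graph with at least three vertices that is not a star, then there exists a minimum total dominating set D of G containing no end vertex (vertex of degree 1) of G. -/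
open SimpleGraph

lemma star_acyclic {V : Type*} (G : SimpleGraph V) (u : V)
    (h : ∀ a b : V, G.Adj a b → a = u ∨ b = u) : G.IsAcyclic := by
  intro x c hcyc
  match c, hcyc with
  | SimpleGraph.Walk.nil, hcyc => exact hcyc.ne_nil rfl
  | SimpleGraph.Walk.cons h1 SimpleGraph.Walk.nil, hcyc => exact h1.ne rfl
  | SimpleGraph.Walk.cons h1 (SimpleGraph.Walk.cons h2 SimpleGraph.Walk.nil), hcyc =>
      have := hcyc.three_le_length
      simp at this
  | SimpleGraph.Walk.cons (v := b) h1 (SimpleGraph.Walk.cons (v := d) h2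
      (SimpleGraph.Walk.cons (v := e) h3 r)), hcyc =>
      have hnd : (b :: d :: r.support).Nodup := by
        have := hcyc.2
        simpa [SimpleGraph.Walk.support_cons] using this
      have hbd : b ≠ d := by simp at hnd; tauto
      have hdr : d ∉ r.support := by simp at hnd; tauto
      have hbr : b ∉ r.support := by simp at hnd; tauto
      have hex : x ∈ r.support := r.end_mem_support
      have hee : e ∈ r.support := r.start_mem_support
      rcases h _ _ h2 with hb | hd
      · rcases h _ _ h3 with hd | he
        · exact hbd (hb.trans hd.symm)
        · exact hbr (hb ▸ he ▸ hee)
      · rcases h _ _ h1 with hx | hb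
        · exact hdr (hd ▸ hx ▸ hex)
        · exact hbd (hb.trans hd.symm)

lemma walk_to_center {V : Type*} (G : SimpleGraph V) (u : V)
    (hN : ∀ y, G.Adj u y → G.neighborSet y = {u}) :
    ∀ (x : V) (p : G.Walk x u), x = u ∨ G.Adj u x := by
  intro x p
  induction p with
  | nil => exact Or.inl rfl
  | cons h q ih =>
    rcases ih hN with h1 | h1
    · subst h1; exact Or.inr h.symm
    · left
      have h2 : _ ∈ G.neighborSet _ := h.symm
      rw [hN _ h1] at h2
      exact h2

/-- If `G` is connected with at least three vertices and is not a star, then there is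
a minimum total dominating set containing no end vertex. -/
theorem stmt4 {V : Type*} [Fintype V] (G : SimpleGraph V)
    (hc : G.Connected) (h3 : 3 ≤ Fintype.card V)
    (hstar : ¬ (G.IsTree ∧ {v : V | 1 < (G.neighborSet v).ncard}.Subsingleton)) :
    ∃ D : Finset V, IsTotalDomSet G D ∧ D.card = gammaT G ∧
      ∀ v ∈ D, ¬ IsEndVertex G v := by
  classical
  -- every vertex has a neighbor
  have hnb : ∀ v : V, ∃ u, G.Adj v u := by
    intro v
    obtain ⟨w, hw⟩ := Fintype.exists_ne_of_one_lt_card (by omega) v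
    obtain ⟨p⟩ := hc v w
    cases p with
    | nil => exact absurd rfl hw.symm
    | cons h q => exact ⟨_, h⟩
  have huniv : IsTotalDomSet G (Finset.univ : Finset V) := fun v =>
    (hnb v).imp fun u hu => ⟨Finset.mem_univ u, hu⟩
  have hne : {n | ∃ D : Finset V, IsTotalDomSet G D ∧ D.card = n}.Nonempty :=
    ⟨_, Finset.univ, huniv, rfl⟩
  have hgle : ∀ D : Finset V, IsTotalDomSet G D → gammaT G ≤ D.card := fun D hD =>
    Nat.sInf_le ⟨D, hD, rfl⟩
  set T := {n | ∃ D : Finset V, IsTotalDomSet G D ∧ D.card = gammaT G ∧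
      (D.filter (fun v => IsEndVertex G v)).card = n} with hT
  have hTne : T.Nonempty := by
    obtain ⟨D, hD, hcard⟩ := Nat.sInf_mem hne
    exact ⟨_, D, hD, hcard, rfl⟩
  obtain ⟨D, hD, hcard, hm⟩ := Nat.sInf_mem hTne
  refine ⟨D, hD, hcard, ?_⟩
  by_contra hbad
  push_neg at hbad
  obtain ⟨v, hvD, hvend⟩ := hbad
  -- v has a unique neighbor u, and u ∈ D
  obtain ⟨u, hu⟩ := Set.ncard_eq_one.mp hvend
  obtain ⟨u', hu'D, hadj⟩ := hD v
  have hu'u : u' = u := by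
    have : u' ∈ G.neighborSet v := hadj
    rw [hu] at this; exact this
  subst hu'u
  have hvu : G.Adj v u' := hadj
  have honly : ∀ x, G.Adj x v → x = u' := by
    intro x hx
    have : x ∈ G.neighborSet v := hx.symm
    rwa [hu] at this
  -- u' has a neighbor that is not an end vertex
  have hw : ∃ w, G.Adj u' w ∧ ¬ IsEndVertex G w := by
    by_contra hA
    push_neg at hA
    apply hstar
    have hNend : ∀ y, G.Adj u' y → G.neighborSet y = {u'} := by
      intro y hy
      obtain ⟨a, ha⟩ := Set.ncard_eq_one.mp (hA y hy)
      have : u' ∈ G.neighborSet y := hy.symm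
      rw [ha] at this
      rw [ha, this]
    have key : ∀ x, x = u' ∨ G.Adj u' x := by
      intro x
      obtain ⟨p⟩ := hc x u'
      exact walk_to_center G u' hNend x p
    have hedge : ∀ a b : V, G.Adj a b → a = u' ∨ b = u' := by
      intro a b hab
      rcases key a with ha | ha
      · exact Or.inl ha
      · right
        have : b ∈ G.neighborSet a := hab
        rwa [hNend a ha] at this
    refine ⟨⟨hc, star_acyclic G u' hedge⟩, ?_⟩
    intro a ha b hb
    simp only [Set.mem_setOf_eq] at ha hb
    rcases key a with h1 | h1
    · rcases key b with h2 | h2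
      · exact h1.trans h2.symm
      · have := hA b h2; unfold IsEndVertex at this; omega
    · have := hA a h1; unfold IsEndVertex at this; omega
  obtain ⟨w, huw, hwend⟩ := hw
  have hwv : w ≠ v := fun h => hwend (h ▸ hvend)
  by_cases hwD : w ∈ D
  · -- erase v is a smaller TDS, contradiction
    have hTDS : IsTotalDomSet G (D.erase v) := by
      intro x
      obtain ⟨y, hyD, hxy⟩ := hD x
      by_cases hyv : y = v
      · subst hyv
        have := honly x hxy
        subst this
        exact ⟨w, Finset.mem_erase.mpr ⟨hwv, hwD⟩, huw⟩
      · exact ⟨y, Finset.mem_erase.mpr ⟨hyv, hyD⟩, hxy⟩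
    have h1 := hgle _ hTDS
    have h2 : (D.erase v).card = D.card - 1 := Finset.card_erase_of_mem hvD
    have h3 : 1 ≤ D.card := Finset.card_pos.mpr ⟨v, hvD⟩
    omega
  · -- swap v for w
    set D' := insert w (D.erase v) with hD'
    have hTDS : IsTotalDomSet G D' := by
      intro x
      obtain ⟨y, hyD, hxy⟩ := hD x
      by_cases hyv : y = v
      · subst hyv
        have := honly x hxy
        subst this
        exact ⟨w, Finset.mem_insert_self _ _, huw⟩
      · exact ⟨y, Finset.mem_insert_of_mem (Finset.mem_erase.mpr ⟨hyv, hyD⟩), hxy⟩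
    have hwe : w ∉ D.erase v := fun h => hwD (Finset.mem_of_mem_erase h)
    have hcard' : D'.card = gammaT G := by
      rw [hD', Finset.card_insert_of_notMem hwe, Finset.card_erase_of_mem hvD]
      have h3 : 1 ≤ D.card := Finset.card_pos.mpr ⟨v, hvD⟩
      omega
    have hfe : D'.filter (fun v => IsEndVertex G v) =
        (D.filter (fun v => IsEndVertex G v)).erase v := by
      rw [hD', Finset.filter_insert, if_neg hwend, Finset.filter_erase]
    have hvf : v ∈ D.filter (fun v => IsEndVertex G v) :=
      Finset.mem_filter.mpr ⟨hvD, hvend⟩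
    have hlt : (D'.filter (fun v => IsEndVertex G v)).card <
        (D.filter (fun v => IsEndVertex G v)).card := by
      rw [hfe, Finset.card_erase_of_mem hvf]
      have : 1 ≤ (D.filter (fun v => IsEndVertex G v)).card :=
        Finset.card_pos.mpr ⟨v, hvf⟩
      omega
    have hmem : (D'.filter (fun v => IsEndVertex G v)).card ∈ T :=
      ⟨D', hTDS, hcard', rfl⟩
    have := Nat.sInf_le hmem
    omega
end

section
/- Let G be a graph with γ_t(G) = τ(G) and let D be a set that is simultaneously a minimum total dominating set and a minimum vertex cover of G. Then D contains no end vertex of G. -/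
open SimpleGraph

/-- If `γ_t(G) = τ(G)` and `D` is a `(γ_t-τ)`-set of `G`, then `D` contains no end vertex. -/
theorem stmt5 {V : Type*} (G : SimpleGraph V) (h : gammaT G = tau G)
    (D : Finset V) (hD : IsGttSet G D) :
    ∀ v ∈ D, ¬ IsEndVertex G v := by
  classical
  rintro v hv hend
  obtain ⟨htd, hvc, hγ, hτ⟩ := hD
  obtain ⟨u, hu⟩ := Set.ncard_eq_one.mp hend
  obtain ⟨w, hwD, hadj⟩ := htd v
  have hw : w = u := by
    have hmem : w ∈ G.neighborSet v := hadj
    rw [hu] at hmem; exact hmem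
  subst hw
  have hvu : v ≠ w := G.ne_of_adj hadj
  have hcov : _root_.IsVertexCover G (D.erase v) := by
    intro a b hab
    rcases hvc hab with ha | hb
    · rcases eq_or_ne a v with rfl | hne
      · right
        have hb : b ∈ G.neighborSet a := hab
        rw [hu, Set.mem_singleton_iff] at hb
        rw [hb]
        exact Finset.mem_erase.mpr ⟨hvu.symm, hwD⟩
      · exact Or.inl (Finset.mem_erase.mpr ⟨hne, ha⟩)
    · rcases eq_or_ne b v with rfl | hne
      · left
        have ha : a ∈ G.neighborSet b := hab.symm
        rw [hu, Set.mem_singleton_iff] at ha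
        rw [ha]
        exact Finset.mem_erase.mpr ⟨hvu.symm, hwD⟩
      · exact Or.inr (Finset.mem_erase.mpr ⟨hne, hb⟩)
  have hle : tau G ≤ (D.erase v).card := Nat.sInf_le ⟨D.erase v, hcov, rfl⟩
  have hlt : (D.erase v).card < D.card := Finset.card_erase_lt_of_mem hv
  omega
end

section
/- Let G be a graph, and let x, y, v be vertices such that x is a leaf, y is its support vertex (the unique neighbor of x), and v is a neighbor of y distinct from x (so v is a 2-support, at distance two from the leaf x). Then for every minimum total dominating set S of G, there is no vertex u ∈ S whose private neighborhood with respect to S equals {v}. In particular, v is not quasi-isolated. -/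
open SimpleGraph

/-- A 2-support (a neighbor `v ≠ x` of the support `y` of a leaf `x`) is never the sole
private neighbor of a vertex of a minimum total dominating set; in particular it is not
quasi-isolated. -/
theorem stmt10 {V : Type*} (G : SimpleGraph V) (x y v : V)
    (hx : G.neighborSet x = {y}) (hyv : G.Adj y v) (hvx : v ≠ x) :
    (∀ S : Finset V, IsTotalDomSet G S → S.card = gammaT G →
      ∀ u ∈ S, pn G S u ≠ {v}) ∧ ¬ QuasiIsolated G v := by
  have main : ∀ S : Finset V, IsTotalDomSet G S → S.card = gammaT G →
      ∀ u ∈ S, pn G S u ≠ {v} := by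
    intro S hS _ u _ hpn
    -- y ∈ S since x's only neighbor is y
    obtain ⟨w, hwS, hxw⟩ := hS x
    have hwy : w = y := by
      have : w ∈ G.neighborSet x := hxw
      rw [hx] at this; exact this
    have hwS : y ∈ S := hwy ▸ hwS
    -- v ∈ pn G S u, so N(v) ∩ S = {u}, and y ∈ N(v) ∩ S, so y = u
    have hv : v ∈ pn G S u := by rw [hpn]; rfl
    have hyNv : y ∈ G.neighborSet v ∩ ↑S := ⟨hyv.symm, hwS⟩
    rw [hv] at hyNv
    have hyu : y = u := hyNv
    -- x ∈ pn G S y = {v}, so x = v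
    have hxpn : x ∈ pn G S u := by
      show G.neighborSet x ∩ ↑S = {u}
      rw [hx, ← hyu]
      ext z
      simp only [Set.mem_inter_iff, Set.mem_singleton_iff]
      exact ⟨fun h => h.1, fun h => ⟨h, h ▸ hwS⟩⟩
    rw [hpn] at hxpn
    exact hvx (hxpn.symm)
  refine ⟨main, ?_⟩
  rintro ⟨S, hS, hcard, u, huS, hpn⟩
  exact main S hS hcard u huS hpn
end

section
/- Let T be a tree, let u be a vertex of T contained in some (γ_t-τ)-set, let P_4 = (v,x,y,z) be a path on 4 new vertices, and let T_1 = T +_{uv} P_4 (add the path and the edge uv). Then γ_t(T_1) = γ_t(T) + 2 and τ(T_1) = τ(T) + 2. -/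
open SimpleGraph

-- adjacency lemmas
lemma graphSum_adj_inl_inl {α β : Type*} (G : SimpleGraph α) (H : SimpleGraph β) (u : α) (v : β)
    (a b : α) : (graphSum G H u v).Adj (Sum.inl a) (Sum.inl b) ↔ G.Adj a b := by
  rw [graphSum, fromRel_adj]
  constructor
  · rintro ⟨hne, h | h⟩ <;>
      rcases h with ⟨a', b', ha, hb, hab⟩ | ⟨a', b', ha, hb, hab⟩ | ⟨ha, hb⟩
    · obtain rfl : a = a' := Sum.inl_injective ha
      obtain rfl : b = b' := Sum.inl_injective hb
      exact hab
    · exact absurd ha (by simp)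
    · exact absurd hb (by simp)
    · obtain rfl : b = a' := Sum.inl_injective ha
      obtain rfl : a = b' := Sum.inl_injective hb
      exact hab.symm
    · exact absurd ha (by simp)
    · exact absurd hb (by simp)
  · intro h
    exact ⟨by simpa using h.ne, Or.inl <| Or.inl ⟨a, b, rfl, rfl, h⟩⟩

lemma graphSum_adj_inr_inr {α β : Type*} (G : SimpleGraph α) (H : SimpleGraph β) (u : α) (v : β)
    (a b : β) : (graphSum G H u v).Adj (Sum.inr a) (Sum.inr b) ↔ H.Adj a b := by
  rw [graphSum, fromRel_adj]
  constructor
  · rintro ⟨hne, h | h⟩ <;>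
      rcases h with ⟨a', b', ha, hb, hab⟩ | ⟨a', b', ha, hb, hab⟩ | ⟨ha, hb⟩
    · exact absurd ha (by simp)
    · obtain rfl : a = a' := Sum.inr_injective ha
      obtain rfl : b = b' := Sum.inr_injective hb
      exact hab
    · exact absurd ha (by simp)
    · exact absurd ha (by simp)
    · obtain rfl : b = a' := Sum.inr_injective ha
      obtain rfl : a = b' := Sum.inr_injective hb
      exact hab.symm
    · exact absurd ha (by simp)
  · intro h
    exact ⟨by simpa using h.ne, Or.inl <| Or.inr <| Or.inl ⟨a, b, rfl, rfl, h⟩⟩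

lemma graphSum_adj_inl_inr {α β : Type*} (G : SimpleGraph α) (H : SimpleGraph β) (u : α) (v : β)
    (a : α) (b : β) : (graphSum G H u v).Adj (Sum.inl a) (Sum.inr b) ↔ a = u ∧ b = v := by
  rw [graphSum, fromRel_adj]
  constructor
  · rintro ⟨hne, h | h⟩ <;>
      rcases h with ⟨a', b', ha, hb, hab⟩ | ⟨a', b', ha, hb, hab⟩ | ⟨ha, hb⟩
    · exact absurd hb (by simp)
    · exact absurd ha (by simp)
    · exact ⟨Sum.inl_injective ha, Sum.inr_injective hb⟩
    · exact absurd ha (by simp)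
    · exact absurd hb (by simp)
    · exact absurd ha (by simp)
  · rintro ⟨rfl, rfl⟩
    exact ⟨by simp, Or.inl <| Or.inr <| Or.inr ⟨rfl, rfl⟩⟩


/-- Operation `O_1`: attaching a `P_4 = (v,x,y,z)` by the edge `uv` (where `v` is a leaf
of the `P_4`) to a vertex `u` in some `(γ_t-τ)`-set raises `γ_t` and `τ` by `2`. -/
theorem stmt11 {V : Type*} (T : SimpleGraph V) (hT : T.IsTree) (u : V)
    (hu : ∃ D : Finset V, IsGttSet T D ∧ u ∈ D) :
    gammaT (graphSum T (SimpleGraph.pathGraph 4) u 0) = gammaT T + 2 ∧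
    tau (graphSum T (SimpleGraph.pathGraph 4) u 0) = tau T + 2 := by
  classical
  obtain ⟨D, ⟨hDtd, hDvc, hDg, hDt⟩, huD⟩ := hu
  set G1 := graphSum T (SimpleGraph.pathGraph 4) u 0 with hG1
  have adjll : ∀ a b : V, G1.Adj (Sum.inl a) (Sum.inl b) ↔ T.Adj a b :=
    graphSum_adj_inl_inl T _ u 0
  have adjrr : ∀ a b : Fin 4, G1.Adj (Sum.inr a) (Sum.inr b) ↔ (pathGraph 4).Adj a b :=
    graphSum_adj_inr_inr T _ u 0
  have adjlr : ∀ (a : V) (b : Fin 4), G1.Adj (Sum.inl a) (Sum.inr b) ↔ a = u ∧ b = 0 :=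
    graphSum_adj_inl_inr T _ u 0
  -- the candidate set for upper bounds
  set S₀ : Finset (V ⊕ Fin 4) := D.image Sum.inl ∪ {Sum.inr 1, Sum.inr 2} with hS₀
  have hS₀card : S₀.card = D.card + 2 := by
    rw [hS₀, Finset.card_union_of_disjoint, Finset.card_image_of_injective _ Sum.inl_injective]
    · rfl
    · simp [Finset.disjoint_left]
  have hS₀td : IsTotalDomSet G1 S₀ := by
    rintro (w | i)
    · obtain ⟨x, hxD, hx⟩ := hDtd w
      exact ⟨Sum.inl x, by simp [hS₀, hxD], (adjll w x).2 hx⟩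
    · fin_cases i
      · exact ⟨Sum.inr 1, by simp [hS₀], (adjrr 0 1).2 (by rw [pathGraph_adj]; decide)⟩
      · exact ⟨Sum.inr 2, by simp [hS₀], (adjrr 1 2).2 (by rw [pathGraph_adj]; decide)⟩
      · exact ⟨Sum.inr 1, by simp [hS₀], (adjrr 2 1).2 (by rw [pathGraph_adj]; decide)⟩
      · exact ⟨Sum.inr 2, by simp [hS₀], (adjrr 3 2).2 (by rw [pathGraph_adj]; decide)⟩
  have hS₀vc : _root_.IsVertexCover G1 S₀ := by
    rintro (a | a) (b | b) hab
    · rcases hDvc ((adjll a b).1 hab) with h | h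
      · exact Or.inl (by simp [hS₀, h])
      · exact Or.inr (by simp [hS₀, h])
    · obtain ⟨rfl, rfl⟩ := (adjlr a b).1 hab
      exact Or.inl (by simp [hS₀, huD])
    · obtain ⟨rfl, rfl⟩ := (adjlr b a).1 hab.symm
      exact Or.inr (by simp [hS₀, huD])
    · have h := (adjrr a b).1 hab
      rw [pathGraph_adj] at h
      have : a = 1 ∨ a = 2 ∨ b = 1 ∨ b = 2 := by
        revert h; fin_cases a <;> fin_cases b <;> decide
      rcases this with h | h | h | h
      · exact Or.inl (by simp [hS₀, h])
      · exact Or.inl (by simp [hS₀, h])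
      · exact Or.inr (by simp [hS₀, h])
      · exact Or.inr (by simp [hS₀, h])
  -- upper bounds
  have hgup : gammaT G1 ≤ gammaT T + 2 := by
    rw [← hDg, ← hS₀card]
    exact Nat.sInf_le ⟨S₀, hS₀td, rfl⟩
  have htup : tau G1 ≤ tau T + 2 := by
    rw [← hDt, ← hS₀card]
    exact Nat.sInf_le ⟨S₀, hS₀vc, rfl⟩
  -- lower bound for gammaT
  have hneS : {n | ∃ S : Finset (V ⊕ Fin 4), IsTotalDomSet G1 S ∧ S.card = n}.Nonempty :=
    ⟨S₀.card, S₀, hS₀td, rfl⟩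
  obtain ⟨S, hStd, hScard⟩ : ∃ S : Finset (V ⊕ Fin 4), IsTotalDomSet G1 S ∧ S.card = gammaT G1 :=
    Nat.sInf_mem hneS
  -- inr 2 ∈ S
  have h2S : Sum.inr 2 ∈ S := by
    obtain ⟨s, hsS, hs⟩ := hStd (Sum.inr 3)
    rcases s with a | b
    · obtain ⟨_, h30⟩ := (adjlr a 3).1 hs.symm
      simp at h30
    · have h := (adjrr 3 b).1 hs
      rw [pathGraph_adj] at h
      have : b = 2 := by revert h; fin_cases b <;> decide
      rwa [← this]
  have h13S : Sum.inr 1 ∈ S ∨ Sum.inr 3 ∈ S := by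
    obtain ⟨s, hsS, hs⟩ := hStd (Sum.inr 2)
    rcases s with a | b
    · obtain ⟨_, h20⟩ := (adjlr a 2).1 hs.symm
      simp at h20
    · have h := (adjrr 2 b).1 hs
      rw [pathGraph_adj] at h
      have : b = 1 ∨ b = 3 := by revert h; fin_cases b <;> decide
      rcases this with rfl | rfl
      · exact Or.inl hsS
      · exact Or.inr hsS
  have hglow : gammaT T + 2 ≤ gammaT G1 := by
    by_cases h0 : Sum.inr 0 ∈ S
    · -- toRight has card ≥ 3
      have h3r : 3 ≤ S.toRight.card := by
        rcases h13S with h1 | h1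
        · have hsub : ({0, 1, 2} : Finset (Fin 4)) ⊆ S.toRight := by
            intro z hz
            fin_cases hz <;> simp [Finset.mem_toRight, h0, h1, h2S]
          calc 3 = ({0, 1, 2} : Finset (Fin 4)).card := by decide
            _ ≤ _ := Finset.card_le_card hsub
        · have hsub : ({0, 2, 3} : Finset (Fin 4)) ⊆ S.toRight := by
            intro z hz
            fin_cases hz <;> simp [Finset.mem_toRight, h0, h1, h2S]
          calc 3 = ({0, 2, 3} : Finset (Fin 4)).card := by decide
            _ ≤ _ := Finset.card_le_card hsub
      obtain ⟨x, hxD, hux⟩ := hDtd u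
      have htd : IsTotalDomSet T (insert x S.toLeft) := by
        intro w
        obtain ⟨s, hsS, hs⟩ := hStd (Sum.inl w)
        rcases s with a | b
        · exact ⟨a, Finset.mem_insert_of_mem (Finset.mem_toLeft.2 hsS), (adjll w a).1 hs⟩
        · obtain ⟨rfl, rfl⟩ := (adjlr w b).1 hs
          exact ⟨x, Finset.mem_insert_self _ _, hux⟩
      have h1 : gammaT T ≤ S.toLeft.card + 1 := by
        calc gammaT T ≤ (insert x S.toLeft).card := Nat.sInf_le ⟨_, htd, rfl⟩
          _ ≤ S.toLeft.card + 1 := Finset.card_insert_le _ _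
      have hsum := @Finset.card_toLeft_add_card_toRight _ _ S
      omega
    · have h2r : 2 ≤ S.toRight.card := by
        rcases h13S with h1 | h1
        · have hsub : ({1, 2} : Finset (Fin 4)) ⊆ S.toRight := by
            intro z hz
            fin_cases hz <;> simp [Finset.mem_toRight, h1, h2S]
          calc 2 = ({1, 2} : Finset (Fin 4)).card := by decide
            _ ≤ _ := Finset.card_le_card hsub
        · have hsub : ({2, 3} : Finset (Fin 4)) ⊆ S.toRight := by
            intro z hz
            fin_cases hz <;> simp [Finset.mem_toRight, h1, h2S]
          calc 2 = ({2, 3} : Finset (Fin 4)).card := by decide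
            _ ≤ _ := Finset.card_le_card hsub
      have htd : IsTotalDomSet T S.toLeft := by
        intro w
        obtain ⟨s, hsS, hs⟩ := hStd (Sum.inl w)
        rcases s with a | b
        · exact ⟨a, Finset.mem_toLeft.2 hsS, (adjll w a).1 hs⟩
        · obtain ⟨rfl, rfl⟩ := (adjlr w b).1 hs
          exact absurd hsS h0
      have h1 : gammaT T ≤ S.toLeft.card := Nat.sInf_le ⟨_, htd, rfl⟩
      have hsum := @Finset.card_toLeft_add_card_toRight _ _ S
      omega
  -- lower bound for tau
  have hneX : {n | ∃ X : Finset (V ⊕ Fin 4), _root_.IsVertexCover G1 X ∧ X.card = n}.Nonempty :=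
    ⟨S₀.card, S₀, hS₀vc, rfl⟩
  obtain ⟨X, hXvc, hXcard⟩ : ∃ X : Finset (V ⊕ Fin 4), _root_.IsVertexCover G1 X ∧ X.card = tau G1 :=
    Nat.sInf_mem hneX
  have htlow : tau T + 2 ≤ tau G1 := by
    have e01 : G1.Adj (Sum.inr 0) (Sum.inr 1) := (adjrr 0 1).2 (by rw [pathGraph_adj]; decide)
    have e23 : G1.Adj (Sum.inr 2) (Sum.inr 3) := (adjrr 2 3).2 (by rw [pathGraph_adj]; decide)
    have h2r : 2 ≤ X.toRight.card := by
      rcases hXvc e01 with h1 | h1 <;> rcases hXvc e23 with h2 | h2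
      all_goals {
        first
        | (have hsub : ({0, 2} : Finset (Fin 4)) ⊆ X.toRight := by
             intro z hz; fin_cases hz <;> simp [Finset.mem_toRight, h1, h2]
           calc 2 = ({0, 2} : Finset (Fin 4)).card := by decide
             _ ≤ _ := Finset.card_le_card hsub)
        | (have hsub : ({0, 3} : Finset (Fin 4)) ⊆ X.toRight := by
             intro z hz; fin_cases hz <;> simp [Finset.mem_toRight, h1, h2]
           calc 2 = ({0, 3} : Finset (Fin 4)).card := by decide
             _ ≤ _ := Finset.card_le_card hsub)
        | (have hsub : ({1, 2} : Finset (Fin 4)) ⊆ X.toRight := by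
             intro z hz; fin_cases hz <;> simp [Finset.mem_toRight, h1, h2]
           calc 2 = ({1, 2} : Finset (Fin 4)).card := by decide
             _ ≤ _ := Finset.card_le_card hsub)
        | (have hsub : ({1, 3} : Finset (Fin 4)) ⊆ X.toRight := by
             intro z hz; fin_cases hz <;> simp [Finset.mem_toRight, h1, h2]
           calc 2 = ({1, 3} : Finset (Fin 4)).card := by decide
             _ ≤ _ := Finset.card_le_card hsub) }
    have hvc : _root_.IsVertexCover T X.toLeft := by
      intro a b hab
      rcases hXvc ((adjll a b).2 hab) with h | h
      · exact Or.inl (Finset.mem_toLeft.2 h)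
      · exact Or.inr (Finset.mem_toLeft.2 h)
    have h1 : tau T ≤ X.toLeft.card := Nat.sInf_le ⟨_, hvc, rfl⟩
    have hsum := @Finset.card_toLeft_add_card_toRight _ _ X
    omega
  exact ⟨le_antisymm hgup hglow, le_antisymm htup htlow⟩
end

section
/- Let T be a tree and let u be a vertex of T contained in some (γ_t-τ)-set. If T_2 is obtained from T by adding a new pendant vertex v adjacent to u, then γ_t(T_2) = γ_t(T) and τ(T_2) = τ(T). -/
open SimpleGraph

lemma adj_inl_inl {V : Type*} (T : SimpleGraph V) (u : V) (a b : V) :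
    (graphSum T (⊥ : SimpleGraph Unit) u ()).Adj (Sum.inl a) (Sum.inl b) ↔ T.Adj a b := by
  simp only [graphSum, SimpleGraph.fromRel_adj]
  constructor
  · rintro ⟨hne, h⟩
    rcases h with (⟨a',b',ha,hb,h⟩|⟨a',b',ha,hb,h⟩|⟨ha,hb⟩)|(⟨a',b',ha,hb,h⟩|⟨a',b',ha,hb,h⟩|⟨ha,hb⟩) <;>
      simp_all
    exact h.symm
  · intro h
    exact ⟨by simp [h.ne], Or.inl (Or.inl ⟨a, b, rfl, rfl, h⟩)⟩

lemma adj_inr {V : Type*} (T : SimpleGraph V) (u : V) (x : V ⊕ Unit) :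
    (graphSum T (⊥ : SimpleGraph Unit) u ()).Adj x (Sum.inr ()) ↔ x = Sum.inl u := by
  simp only [graphSum, SimpleGraph.fromRel_adj]
  constructor
  · rintro ⟨hne, h⟩
    rcases h with (⟨a',b',ha,hb,h⟩|⟨a',b',ha,hb,h⟩|⟨ha,hb⟩)|(⟨a',b',ha,hb,h⟩|⟨a',b',ha,hb,h⟩|⟨ha,hb⟩) <;>
      simp_all
  · rintro rfl
    refine ⟨by simp, Or.inl (Or.inr (Or.inr ?_))⟩; simp

/-- Operation `O_2`: adding a pendant vertex to a vertex `u` in some `(γ_t-τ)`-set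
leaves `γ_t` and `τ` unchanged. -/
theorem stmt12 {V : Type*} (T : SimpleGraph V) (hT : T.IsTree) (u : V)
    (hu : ∃ D : Finset V, IsGttSet T D ∧ u ∈ D) :
    gammaT (graphSum T (⊥ : SimpleGraph Unit) u ()) = gammaT T ∧
    tau (graphSum T (⊥ : SimpleGraph Unit) u ()) = tau T := by
  classical
  obtain ⟨D, ⟨hDt, hDc, hDg, hDtau⟩, huD⟩ := hu
  set T2 := graphSum T (⊥ : SimpleGraph Unit) u () with hT2
  obtain ⟨w, hwD, huw⟩ := hDt u
  set f : V ⊕ Unit → V := Sum.elim id (fun _ => w) with hf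
  -- D.image inl is a total dominating set and vertex cover of T2
  have hDinl_t : IsTotalDomSet T2 (D.image Sum.inl) := by
    rintro (x | x)
    · obtain ⟨y, hyD, hxy⟩ := hDt x
      exact ⟨Sum.inl y, Finset.mem_image_of_mem _ hyD, (adj_inl_inl T u x y).2 hxy⟩
    · cases x
      exact ⟨Sum.inl u, Finset.mem_image_of_mem _ huD,
        ((adj_inr T u (Sum.inl u)).2 rfl).symm⟩
  have hDinl_c : IsVertexCover T2 (D.image Sum.inl) := by
    rintro (a | a) (b | b) hab
    · rcases hDc ((adj_inl_inl T u a b).1 hab) with h | h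
      · exact Or.inl (Finset.mem_image_of_mem _ h)
      · exact Or.inr (Finset.mem_image_of_mem _ h)
    · cases b
      have : Sum.inl a = Sum.inl u := (adj_inr T u _).1 hab
      exact Or.inl (by rw [this]; exact Finset.mem_image_of_mem _ huD)
    · cases a
      have : Sum.inl b = Sum.inl u := (adj_inr T u _).1 hab.symm
      exact Or.inr (by rw [this]; exact Finset.mem_image_of_mem _ huD)
    · cases a; cases b
      exact absurd ((adj_inr T u _).1 hab) (by simp)
  have hcard_inl : (D.image Sum.inl).card = D.card :=
    Finset.card_image_of_injective D (Sum.inl_injective (β := Unit))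
  -- downward transfer: from a set in T2 produce one in T via f
  have hf_card : ∀ S : Finset (V ⊕ Unit), (S.image f).card ≤ S.card :=
    fun S => Finset.card_image_le
  have htrans_t : ∀ S : Finset (V ⊕ Unit), IsTotalDomSet T2 S →
      IsTotalDomSet T (S.image f) := by
    intro S hS x
    obtain ⟨y, hyS, hxy⟩ := hS (Sum.inl x)
    rcases y with z | z
    · exact ⟨z, Finset.mem_image_of_mem f hyS, (adj_inl_inl T u x z).1 hxy⟩
    · cases z
      have hx : x = u := Sum.inl_injective ((adj_inr T u _).1 hxy)
      exact ⟨w, Finset.mem_image_of_mem f hyS, hx ▸ huw⟩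
  have htrans_c : ∀ S : Finset (V ⊕ Unit), _root_.IsVertexCover T2 S →
      _root_.IsVertexCover T (S.image f) := by
    intro S hS a b hab
    rcases hS ((adj_inl_inl T u a b).2 hab) with h | h
    · exact Or.inl (Finset.mem_image_of_mem f h)
    · exact Or.inr (Finset.mem_image_of_mem f h)
  -- gammaT equality
  have hg_ne : {n | ∃ S : Finset (V ⊕ Unit), IsTotalDomSet T2 S ∧ S.card = n}.Nonempty :=
    ⟨_, D.image Sum.inl, hDinl_t, rfl⟩
  have hg_le : gammaT T2 ≤ gammaT T := by
    rw [← hDg, ← hcard_inl]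
    exact Nat.sInf_le ⟨D.image Sum.inl, hDinl_t, rfl⟩
  have hg_ge : gammaT T ≤ gammaT T2 := by
    obtain ⟨S, hS, hScard⟩ := Nat.sInf_mem hg_ne
    calc gammaT T ≤ (S.image f).card := Nat.sInf_le ⟨S.image f, htrans_t S hS, rfl⟩
      _ ≤ S.card := hf_card S
      _ = gammaT T2 := hScard
  -- tau equality
  have hc_ne : {n | ∃ S : Finset (V ⊕ Unit), _root_.IsVertexCover T2 S ∧ S.card = n}.Nonempty :=
    ⟨_, D.image Sum.inl, hDinl_c, rfl⟩
  have hc_le : tau T2 ≤ tau T := by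
    rw [← hDtau, ← hcard_inl]
    exact Nat.sInf_le ⟨D.image Sum.inl, hDinl_c, rfl⟩
  have hc_ge : tau T ≤ tau T2 := by
    obtain ⟨S, hS, hScard⟩ := Nat.sInf_mem hc_ne
    calc tau T ≤ (S.image f).card := Nat.sInf_le ⟨S.image f, htrans_c S hS, rfl⟩
      _ ≤ S.card := hf_card S
      _ = tau T2 := hScard
  exact ⟨le_antisymm hg_le hg_ge, le_antisymm hc_le hc_ge⟩
end

section
/- Let T be a tree, let u be a vertex of T which belongs to some (γ_t-τ)-set and is not quasi-isolated, and let T_3 be obtained from T by attaching a new path (v,w) via the edge uv. Then γ_t(T_3) = γ_t(T) + 1 and τ(T_3) = τ(T) + 1. -/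
open SimpleGraph

section Aux

variable {α β : Type*} (G : SimpleGraph α) (H : SimpleGraph β) (u : α) (v : β)

lemma gs_inl_inl {a b : α} : (graphSum G H u v).Adj (Sum.inl a) (Sum.inl b) ↔ G.Adj a b := by
  simp only [graphSum, fromRel_adj]
  constructor
  · rintro ⟨-, h⟩
    rcases h with (⟨a',b',h1,h2,h3⟩|⟨a',b',h1,h2,h3⟩|⟨h1,h2⟩) | (⟨a',b',h1,h2,h3⟩|⟨a',b',h1,h2,h3⟩|⟨h1,h2⟩) <;>
      simp_all
    exact h3.symm
  · intro h
    exact ⟨by simp [h.ne], Or.inl (Or.inl ⟨a, b, rfl, rfl, h⟩)⟩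

lemma gs_inl_inr {a : α} {b : β} :
    (graphSum G H u v).Adj (Sum.inl a) (Sum.inr b) ↔ a = u ∧ b = v := by
  simp only [graphSum, fromRel_adj]
  constructor
  · rintro ⟨-, h⟩
    rcases h with (⟨a',b',h1,h2,h3⟩|⟨a',b',h1,h2,h3⟩|⟨h1,h2⟩) | (⟨a',b',h1,h2,h3⟩|⟨a',b',h1,h2,h3⟩|⟨h1,h2⟩) <;>
      simp_all
  · rintro ⟨rfl, rfl⟩
    exact ⟨by simp, Or.inl (Or.inr (Or.inr ⟨rfl, rfl⟩))⟩

lemma gs_inr_inr {a b : β} : (graphSum G H u v).Adj (Sum.inr a) (Sum.inr b) ↔ H.Adj a b := by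
  simp only [graphSum, fromRel_adj]
  constructor
  · rintro ⟨-, h⟩
    rcases h with (⟨a',b',h1,h2,h3⟩|⟨a',b',h1,h2,h3⟩|⟨h1,h2⟩) | (⟨a',b',h1,h2,h3⟩|⟨a',b',h1,h2,h3⟩|⟨h1,h2⟩) <;>
      simp_all
    exact h3.symm
  · intro h
    exact ⟨by simp [h.ne], Or.inl (Or.inr (Or.inl ⟨a, b, rfl, rfl, h⟩))⟩

lemma gs_inr_inl {a : α} {b : β} :
    (graphSum G H u v).Adj (Sum.inr b) (Sum.inl a) ↔ a = u ∧ b = v := by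
  rw [SimpleGraph.adj_comm]; exact gs_inl_inr G H u v

lemma gammaT_le {V : Type*} (G : SimpleGraph V) {D : Finset V} (h : IsTotalDomSet G D) :
    gammaT G ≤ D.card :=
  Nat.sInf_le ⟨D, h, rfl⟩

lemma tau_le {V : Type*} (G : SimpleGraph V) {X : Finset V} (h : _root_.IsVertexCover G X) :
    tau G ≤ X.card :=
  Nat.sInf_le ⟨X, h, rfl⟩

lemma p2_adj01 : (SimpleGraph.pathGraph 2).Adj 0 1 := by
  rw [SimpleGraph.pathGraph_adj]; left; rfl

lemma p2_adj_one {b : Fin 2} (h : (SimpleGraph.pathGraph 2).Adj 1 b) : b = 0 := by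
  rw [SimpleGraph.pathGraph_adj] at h
  omega

end Aux

/-- Operation `O_3`: attaching a `P_2 = (v,w)` by the edge `uv` to a vertex `u` in some
`(γ_t-τ)`-set which is not quasi-isolated raises `γ_t` and `τ` by `1`. -/
theorem stmt13 {V : Type*} (T : SimpleGraph V) (hT : T.IsTree) (u : V)
    (hu : ∃ D : Finset V, IsGttSet T D ∧ u ∈ D) (hqi : ¬ QuasiIsolated T u) :
    gammaT (graphSum T (SimpleGraph.pathGraph 2) u 0) = gammaT T + 1 ∧
    tau (graphSum T (SimpleGraph.pathGraph 2) u 0) = tau T + 1 := by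
  classical
  obtain ⟨D, ⟨hDtd, hDvc, hDγ, hDτ⟩, huD⟩ := hu
  set G3 := graphSum T (SimpleGraph.pathGraph 2) u 0 with hG3
  set inlEmb : V ↪ V ⊕ Fin 2 := ⟨Sum.inl, Sum.inl_injective⟩ with hinlEmb
  -- the upper-bound witness set
  set D3 : Finset (V ⊕ Fin 2) := insert (Sum.inr 0) (D.map inlEmb) with hD3
  have hD3card : D3.card = D.card + 1 := by
    rw [hD3, Finset.card_insert_of_notMem (by simp [hinlEmb]), Finset.card_map]
  have hD3td : IsTotalDomSet G3 D3 := by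
    rintro (a | i)
    · obtain ⟨w, hwD, hadj⟩ := hDtd a
      exact ⟨Sum.inl w, by simp [hD3, hinlEmb, hwD], (gs_inl_inl T _ u 0).2 hadj⟩
    · fin_cases i
      · exact ⟨Sum.inl u, by simp [hD3, hinlEmb, huD], (gs_inr_inl T _ u 0).2 ⟨rfl, rfl⟩⟩
      · exact ⟨Sum.inr 0, by simp [hD3],
          (gs_inr_inr T _ u 0).2 (by exact p2_adj01.symm)⟩
  have hD3vc : _root_.IsVertexCover G3 D3 := by
    rintro (a | a) (b | b) hadj
    · rcases hDvc ((gs_inl_inl T _ u 0).1 hadj) with h | h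
      · exact Or.inl (by simp [hD3, hinlEmb, h])
      · exact Or.inr (by simp [hD3, hinlEmb, h])
    · obtain ⟨rfl, rfl⟩ := (gs_inl_inr T _ u 0).1 hadj
      exact Or.inr (by simp [hD3])
    · obtain ⟨rfl, rfl⟩ := (gs_inr_inl T _ u 0).1 hadj
      exact Or.inl (by simp [hD3])
    · have h := (gs_inr_inr T _ u 0).1 hadj
      rw [SimpleGraph.pathGraph_adj] at h
      have : a = 0 ∨ b = 0 := by omega
      rcases this with rfl | rfl
      · exact Or.inl (by simp [hD3])
      · exact Or.inr (by simp [hD3])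
  have hγle : gammaT G3 ≤ gammaT T + 1 := by
    calc gammaT G3 ≤ D3.card := gammaT_le G3 hD3td
    _ = gammaT T + 1 := by rw [hD3card, hDγ]
  have hτle : tau G3 ≤ tau T + 1 := by
    calc tau G3 ≤ D3.card := tau_le G3 hD3vc
    _ = tau T + 1 := by rw [hD3card, hDτ]
  -- a minimum TDS of G3 exists
  have hγmem : gammaT G3 ∈ {n | ∃ D : Finset (V ⊕ Fin 2), IsTotalDomSet G3 D ∧ D.card = n} :=
    Nat.sInf_mem ⟨D3.card, D3, hD3td, rfl⟩
  obtain ⟨S, hStd, hScard⟩ := hγmem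
  -- a minimum vertex cover of G3 exists
  have hτmem : tau G3 ∈ {n | ∃ X : Finset (V ⊕ Fin 2), _root_.IsVertexCover G3 X ∧ X.card = n} :=
    Nat.sInf_mem ⟨D3.card, D3, hD3vc, rfl⟩
  obtain ⟨X, hXvc, hXcard⟩ := hτmem
  -- τ lower bound
  have hτge : tau T + 1 ≤ tau G3 := by
    set XT : Finset V := X.preimage Sum.inl (Sum.inl_injective.injOn) with hXT
    have hXTvc : _root_.IsVertexCover T XT := by
      intro a b hab
      rcases hXvc ((gs_inl_inl T _ u 0).2 hab) with h | h
      · exact Or.inl (Finset.mem_preimage.2 h)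
      · exact Or.inr (Finset.mem_preimage.2 h)
    have hMsub : XT.map inlEmb ⊆ X := by
      intro z hz
      obtain ⟨a, ha, rfl⟩ := Finset.mem_map.1 hz
      exact Finset.mem_preimage.1 ha
    have hedge : G3.Adj (Sum.inr 0) (Sum.inr 1) := (gs_inr_inr T _ u 0).2 p2_adj01
    have hone : ∃ z : Fin 2, Sum.inr z ∈ X := by
      rcases hXvc hedge with h | h
      · exact ⟨0, h⟩
      · exact ⟨1, h⟩
    obtain ⟨z, hz⟩ := hone
    have hins : insert (Sum.inr z) (XT.map inlEmb) ⊆ X := by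
      intro y hy
      rcases Finset.mem_insert.1 hy with rfl | hy
      · exact hz
      · exact hMsub hy
    have hcard : XT.card + 1 ≤ X.card := by
      have h1 : (insert (Sum.inr z) (XT.map inlEmb)).card = XT.card + 1 := by
        rw [Finset.card_insert_of_notMem (by simp [hinlEmb]), Finset.card_map]
      rw [← h1]
      exact Finset.card_le_card hins
    calc tau T + 1 ≤ XT.card + 1 := by
          exact Nat.add_le_add_right (tau_le T hXTvc) 1
    _ ≤ X.card := hcard
    _ = tau G3 := hXcard
  -- γ_t lower bound
  have hγge : gammaT T + 1 ≤ gammaT G3 := by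
    set ST : Finset V := S.preimage Sum.inl (Sum.inl_injective.injOn) with hST
    set M : Finset (V ⊕ Fin 2) := ST.map inlEmb with hM
    have hMsub : M ⊆ S := by
      intro z hz
      obtain ⟨a, ha, rfl⟩ := Finset.mem_map.1 hz
      exact Finset.mem_preimage.1 ha
    -- inr 0 ∈ S
    have hS0 : Sum.inr 0 ∈ S := by
      obtain ⟨y, hyS, hadj⟩ := hStd (Sum.inr 1)
      have : y = Sum.inr 0 := by
        rcases y with a | b
        · obtain ⟨-, h⟩ := (gs_inr_inl T _ u 0).1 hadj
          exact absurd h (by decide)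
        · have := p2_adj_one ((gs_inr_inr T _ u 0).1 hadj)
          rw [this]
      rwa [this] at hyS
    -- a T-neighbor of u
    obtain ⟨x0, -, hux0⟩ := hDtd u
    -- domination transfer for v ≠ u
    have hdom : ∀ v : V, v ≠ u → ∃ b ∈ ST, T.Adj v b := by
      intro v hv
      obtain ⟨y, hyS, hadj⟩ := hStd (Sum.inl v)
      rcases y with b | b
      · exact ⟨b, Finset.mem_preimage.2 hyS, (gs_inl_inl T _ u 0).1 hadj⟩
      · obtain ⟨h, -⟩ := (gs_inl_inr T _ u 0).1 hadj
        exact absurd h hv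
    by_cases h1 : Sum.inr 1 ∈ S
    · -- both inr vertices in S
      have hcard2 : ST.card + 2 ≤ S.card := by
        have hsub : insert (Sum.inr 0) (insert (Sum.inr 1) M) ⊆ S := by
          intro y hy
          rcases Finset.mem_insert.1 hy with rfl | hy
          · exact hS0
          · rcases Finset.mem_insert.1 hy with rfl | hy
            · exact h1
            · exact hMsub hy
        have hc : (insert (Sum.inr 0) (insert (Sum.inr 1) M)).card = ST.card + 2 := by
          rw [Finset.card_insert_of_notMem (by simp [hM, hinlEmb]),
            Finset.card_insert_of_notMem (by simp [hM, hinlEmb]), Finset.card_map]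
        rw [← hc]
        exact Finset.card_le_card hsub
      have hS'td : IsTotalDomSet T (insert x0 ST) := by
        intro v
        by_cases hv : v = u
        · exact ⟨x0, Finset.mem_insert_self _ _, hv ▸ hux0⟩
        · obtain ⟨b, hb, hadj⟩ := hdom v hv
          exact ⟨b, Finset.mem_insert_of_mem hb, hadj⟩
      calc gammaT T + 1 ≤ (insert x0 ST).card + 1 :=
            Nat.add_le_add_right (gammaT_le T hS'td) 1
      _ ≤ (ST.card + 1) + 1 := Nat.add_le_add_right (Finset.card_insert_le _ _) 1
      _ ≤ S.card := hcard2
      _ = gammaT G3 := hScard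
    · -- inr 1 ∉ S, hence inl u ∈ S and S = {inr 0} ∪ M
      have huS : u ∈ ST := by
        obtain ⟨y, hyS, hadj⟩ := hStd (Sum.inr 0)
        rcases y with a | b
        · obtain ⟨rfl, -⟩ := (gs_inr_inl T _ u 0).1 hadj
          exact Finset.mem_preimage.2 hyS
        · have hb : b = 1 := by
            have := (gs_inr_inr T _ u 0).1 hadj
            rw [SimpleGraph.pathGraph_adj] at this
            omega
          rw [hb] at hyS
          exact absurd hyS h1
      have hSeq : S = insert (Sum.inr 0) M := by
        apply Finset.Subset.antisymm
        · rintro (a | b) hz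
          · exact Finset.mem_insert_of_mem
              (Finset.mem_map.2 ⟨a, Finset.mem_preimage.2 hz, rfl⟩)
          · fin_cases b
            · exact Finset.mem_insert_self _ _
            · exact absurd hz h1
        · intro y hy
          rcases Finset.mem_insert.1 hy with rfl | hy
          · exact hS0
          · exact hMsub hy
      have hScard' : S.card = ST.card + 1 := by
        rw [hSeq, Finset.card_insert_of_notMem (by simp [hM, hinlEmb]), Finset.card_map]
      by_cases h2 : ∃ b ∈ ST, T.Adj u b
      · have hSTtd : IsTotalDomSet T ST := by
          intro v
          by_cases hv : v = u
          · obtain ⟨b, hb, hadj⟩ := h2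
            exact ⟨b, hb, hv ▸ hadj⟩
          · exact hdom v hv
        calc gammaT T + 1 ≤ ST.card + 1 := Nat.add_le_add_right (gammaT_le T hSTtd) 1
        _ = S.card := hScard'.symm
        _ = gammaT G3 := hScard
      · push_neg at h2
        have hx0ST : x0 ∉ ST := fun h => h2 x0 h hux0
        set S' : Finset V := insert x0 ST with hS'
        have hS'td : IsTotalDomSet T S' := by
          intro v
          by_cases hv : v = u
          · exact ⟨x0, Finset.mem_insert_self _ _, hv ▸ hux0⟩
          · obtain ⟨b, hb, hadj⟩ := hdom v hv
            exact ⟨b, Finset.mem_insert_of_mem hb, hadj⟩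
        have hS'card : S'.card = S.card := by
          rw [hS', Finset.card_insert_of_notMem hx0ST, hScard']
        by_contra hc
        push_neg at hc
        have hle : S.card ≤ gammaT T := by omega
        have hS'min : S'.card = gammaT T :=
          le_antisymm (hS'card ▸ hle) (gammaT_le T hS'td)
        -- u is quasi-isolated via S' and x0, contradiction
        apply hqi
        refine ⟨S', hS'td, hS'min, x0, Finset.mem_insert_self _ _, ?_⟩
        ext w
        simp only [pn, Set.mem_setOf_eq, Set.mem_singleton_iff]
        constructor
        · intro hw
          by_contra hwu
          obtain ⟨b, hb, hadj⟩ := hdom w hwu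
          have hbmem : b ∈ T.neighborSet w ∩ ↑S' :=
            ⟨hadj, by simp [hS', hb]⟩
          rw [hw, Set.mem_singleton_iff] at hbmem
          exact hx0ST (hbmem ▸ hb)
        · rintro rfl
          ext y
          simp only [Set.mem_inter_iff, SimpleGraph.mem_neighborSet, Finset.coe_insert,
            Set.mem_insert_iff, Finset.mem_coe, Set.mem_singleton_iff, hS']
          constructor
          · rintro ⟨hadj, rfl | hy⟩
            · rfl
            · exact absurd hadj (h2 y hy)
          · rintro rfl
            exact ⟨hux0, Or.inl rfl⟩
  exact ⟨le_antisymm hγle hγge, le_antisymm hτle hτge⟩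
end

section
/- Let T be a tree with a quasi-isolated vertex u (with respect to some minimum total dominating set D), let P_4 be a path with support vertices v and w, and let T' = T +_{uv} P_4. Then γ_t(T') = γ_t(T) + 1. -/
open SimpleGraph

lemma graphSum_adj {α β : Type*} (G : SimpleGraph α) (H : SimpleGraph β) (u : α) (v : β)
    (x y : α ⊕ β) :
    (graphSum G H u v).Adj x y ↔
      (∃ a b, x = Sum.inl a ∧ y = Sum.inl b ∧ G.Adj a b) ∨
      (∃ a b, x = Sum.inr a ∧ y = Sum.inr b ∧ H.Adj a b) ∨
      (x = Sum.inl u ∧ y = Sum.inr v) ∨ (x = Sum.inr v ∧ y = Sum.inl u) := by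
  simp only [graphSum, fromRel_adj]
  constructor
  · rintro ⟨hne, h | h⟩
    · rcases h with ⟨a,b,rfl,rfl,h⟩|⟨a,b,rfl,rfl,h⟩|⟨rfl,rfl⟩
      · exact Or.inl ⟨a,b,rfl,rfl,h⟩
      · exact Or.inr (Or.inl ⟨a,b,rfl,rfl,h⟩)
      · exact Or.inr (Or.inr (Or.inl ⟨rfl,rfl⟩))
    · rcases h with ⟨a,b,rfl,rfl,h⟩|⟨a,b,rfl,rfl,h⟩|⟨rfl,rfl⟩
      · exact Or.inl ⟨b,a,rfl,rfl,h.symm⟩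
      · exact Or.inr (Or.inl ⟨b,a,rfl,rfl,h.symm⟩)
      · exact Or.inr (Or.inr (Or.inr ⟨rfl,rfl⟩))
  · rintro (⟨a,b,rfl,rfl,h⟩|⟨a,b,rfl,rfl,h⟩|⟨rfl,rfl⟩|⟨rfl,rfl⟩)
    · exact ⟨by simpa using h.ne, Or.inl (Or.inl ⟨a,b,rfl,rfl,h⟩)⟩
    · exact ⟨by simpa using h.ne, Or.inl (Or.inr (Or.inl ⟨a,b,rfl,rfl,h⟩))⟩
    · exact ⟨by simp, Or.inl (Or.inr (Or.inr ⟨rfl,rfl⟩))⟩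
    · exact ⟨by simp, Or.inr (Or.inr (Or.inr ⟨rfl,rfl⟩))⟩

theorem stmt18' {V : Type*} (T : SimpleGraph V)
    (D : Finset V) (hD : IsTotalDomSet T D) (hmin : D.card = gammaT T)
    (u : V) (hqi : ∃ z ∈ D, pn T D z = {u}) :
    gammaT (graphSum T (SimpleGraph.pathGraph 4) u 1) = gammaT T + 1 := by
  classical
  obtain ⟨z, hzD, hpn⟩ := hqi
  -- facts from the private neighborhood condition
  have hu : T.neighborSet u ∩ ↑D = {z} := by
    have : u ∈ pn T D z := by rw [hpn]; rfl
    exact this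
  have huz : T.Adj u z := by
    have : z ∈ T.neighborSet u ∩ ↑D := by rw [hu]; rfl
    exact this.1
  -- every vertex other than u has a D-neighbor other than z
  have hclaim : ∀ w : V, w ≠ u → ∃ d ∈ D, d ≠ z ∧ T.Adj w d := by
    intro w hw
    by_contra h
    push_neg at h
    have hwpn : w ∈ pn T D z := by
      show T.neighborSet w ∩ ↑D = {z}
      apply Set.eq_singleton_iff_unique_mem.mpr
      constructor
      · obtain ⟨d, hdD, hadj⟩ := hD w
        have := h d hdD
        rcases eq_or_ne d z with rfl | hne
        · exact ⟨hadj, hdD⟩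
        · exact absurd hadj (this hne)
      · rintro d ⟨hadj, hdD⟩
        by_contra hne
        exact h d hdD hne hadj
    rw [hpn] at hwpn
    exact hw hwpn
  set P := SimpleGraph.pathGraph 4 with hP
  set G' := graphSum T P u 1 with hG'
  have hadjP01 : P.Adj 0 1 := by rw [hP, pathGraph_adj]; decide
  have hadjP12 : P.Adj 1 2 := by rw [hP, pathGraph_adj]; decide
  have hadjP32 : P.Adj 3 2 := by rw [hP, pathGraph_adj]; decide
  -- upper bound set
  set D₁ : Finset (V ⊕ Fin 4) :=
    ((D.erase z).image Sum.inl) ∪ {Sum.inr 1, Sum.inr 2} with hD₁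
  have hTDS₁ : IsTotalDomSet G' D₁ := by
    rintro (w | i)
    · by_cases hw : w = u
      · subst hw
        refine ⟨Sum.inr 1, by simp [hD₁], ?_⟩
        rw [hG', graphSum_adj]
        exact Or.inr (Or.inr (Or.inl ⟨rfl, rfl⟩))
      · obtain ⟨d, hdD, hdz, hadj⟩ := hclaim w hw
        refine ⟨Sum.inl d, by simp [hD₁, Finset.mem_erase, hdz, hdD], ?_⟩
        rw [hG', graphSum_adj]
        exact Or.inl ⟨w, d, rfl, rfl, hadj⟩
    · have mem1 : Sum.inr 1 ∈ D₁ := by simp [hD₁]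
      have mem2 : Sum.inr 2 ∈ D₁ := by simp [hD₁]
      fin_cases i
      · refine ⟨Sum.inr 1, mem1, ?_⟩
        rw [hG', graphSum_adj]
        exact Or.inr (Or.inl ⟨0, 1, rfl, rfl, hadjP01⟩)
      · refine ⟨Sum.inr 2, mem2, ?_⟩
        rw [hG', graphSum_adj]
        exact Or.inr (Or.inl ⟨1, 2, rfl, rfl, hadjP12⟩)
      · refine ⟨Sum.inr 1, mem1, ?_⟩
        rw [hG', graphSum_adj]
        exact Or.inr (Or.inl ⟨2, 1, rfl, rfl, hadjP12.symm⟩)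
      · refine ⟨Sum.inr 2, mem2, ?_⟩
        rw [hG', graphSum_adj]
        exact Or.inr (Or.inl ⟨3, 2, rfl, rfl, hadjP32⟩)
  have hcard₁ : D₁.card = D.card + 1 := by
    rw [hD₁, Finset.card_union_of_disjoint (by simp)]
    rw [Finset.card_image_of_injective _ Sum.inl_injective,
      Finset.card_erase_of_mem hzD]
    have : 1 ≤ D.card := Finset.card_pos.mpr ⟨z, hzD⟩
    have h2 : ({Sum.inr 1, Sum.inr 2} : Finset (V ⊕ Fin 4)).card = 2 := by
      rw [Finset.card_insert_of_notMem (by simp), Finset.card_singleton]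
    omega
  have hub : gammaT G' ≤ gammaT T + 1 := by
    have := Nat.sInf_le (s := {n | ∃ E : Finset (V ⊕ Fin 4), IsTotalDomSet G' E ∧ E.card = n})
      ⟨D₁, hTDS₁, rfl⟩
    rw [hcard₁, hmin] at this
    exact this
  -- lower bound
  have hmem : gammaT G' ∈ {n | ∃ E : Finset (V ⊕ Fin 4), IsTotalDomSet G' E ∧ E.card = n} :=
    Nat.sInf_mem ⟨D₁.card, D₁, hTDS₁, rfl⟩
  obtain ⟨D', hD', hcard'⟩ := hmem
  have h1 : Sum.inr 1 ∈ D' := by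
    obtain ⟨y, hy, hadj⟩ := hD' (Sum.inr 0)
    rw [hG', graphSum_adj] at hadj
    rcases hadj with ⟨a,b,hx,hy',hab⟩|⟨a,b,hx,hy',hab⟩|⟨hx,hy'⟩|⟨hx,hy'⟩
    · exact absurd hx (by simp)
    · have ha : a = 0 := by simpa using hx.symm
      subst ha
      rw [hP, pathGraph_adj] at hab
      have hb : b = 1 := by
        have : ∀ c : Fin 4, ((0 : Fin 4).val + 1 = c.val ∨ c.val + 1 = (0 : Fin 4).val) → c = 1 := by decide
        exact this b hab
      rw [hy', hb] at hy; exact hy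
    · exact absurd hx (by simp)
    · exact absurd hx (by simp)
  have h2 : Sum.inr 2 ∈ D' := by
    obtain ⟨y, hy, hadj⟩ := hD' (Sum.inr 3)
    rw [hG', graphSum_adj] at hadj
    rcases hadj with ⟨a,b,hx,hy',hab⟩|⟨a,b,hx,hy',hab⟩|⟨hx,hy'⟩|⟨hx,hy'⟩
    · exact absurd hx (by simp)
    · have ha : a = 3 := by simpa using hx.symm
      subst ha
      rw [hP, pathGraph_adj] at hab
      have hb : b = 2 := by
        have : ∀ c : Fin 4, ((3 : Fin 4).val + 1 = c.val ∨ c.val + 1 = (3 : Fin 4).val) → c = 2 := by decide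
        exact this b hab
      rw [hy', hb] at hy; exact hy
    · exact absurd hx (by simp)
    · exact absurd hx (by simp)
  set E : Finset (V ⊕ Fin 4) := (D'.erase (Sum.inr 1)).erase (Sum.inr 2) with hE
  set F : Finset V := E.image (Sum.elim id (fun _ => z)) ∪ {z} with hF
  have hTDSF : IsTotalDomSet T F := by
    intro w
    obtain ⟨y, hy, hadj⟩ := hD' (Sum.inl w)
    rw [hG', graphSum_adj] at hadj
    rcases hadj with ⟨a,b,hx,hy',hab⟩|⟨a,b,hx,hy',hab⟩|⟨hx,hy'⟩|⟨hx,hy'⟩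
    · have ha : a = w := by simpa using hx.symm
      subst ha
      refine ⟨b, ?_, hab⟩
      have hbE : Sum.inl b ∈ E := by
        rw [hE]
        simp only [Finset.mem_erase]
        refine ⟨by simp, by simp, by rw [← hy']; exact hy⟩
      rw [hF]
      apply Finset.mem_union_left
      exact Finset.mem_image.mpr ⟨Sum.inl b, hbE, rfl⟩
    · exact absurd hx (by simp)
    · have hw : w = u := by simpa using hx
      subst hw
      exact ⟨z, by rw [hF]; simp, huz⟩
    · exact absurd hx (by simp)
  have hcardE : E.card = D'.card - 2 := by
    rw [hE, Finset.card_erase_of_mem (by simp [Finset.mem_erase, h2]),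
      Finset.card_erase_of_mem h1]
    omega
  have hD'2 : 2 ≤ D'.card := by
    have : Sum.inr 2 ∈ D'.erase (Sum.inr 1) := by simp [Finset.mem_erase, h2]
    have h3 := Finset.card_erase_of_mem h1
    have h4 : 1 ≤ (D'.erase (Sum.inr 1)).card := Finset.card_pos.mpr ⟨_, this⟩
    omega
  have hcardF : F.card ≤ E.card + 1 := by
    calc F.card ≤ (E.image (Sum.elim id (fun _ => z))).card + ({z} : Finset V).card :=
          Finset.card_union_le _ _
      _ ≤ E.card + 1 := by
          have := Finset.card_image_le (s := E) (f := Sum.elim id (fun _ => z))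
          simp only [Finset.card_singleton]
          omega
  have hlbT : gammaT T ≤ F.card :=
    Nat.sInf_le ⟨F, hTDSF, rfl⟩
  omega

/-- If `u` is `D`-quasi-isolated for some minimum total dominating set `D` of a tree
`T`, and a `P_4` is attached by an edge from its support vertex `v` to `u`, then
`γ_t(T') = γ_t(T) + 1`. -/
theorem stmt18 {V : Type*} (T : SimpleGraph V) (hT : T.IsTree)
    (D : Finset V) (hD : IsTotalDomSet T D) (hmin : D.card = gammaT T)
    (u : V) (hqi : ∃ z ∈ D, pn T D z = {u}) :
    gammaT (graphSum T (SimpleGraph.pathGraph 4) u 1) = gammaT T + 1 :=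
  stmt18' T D hD hmin u hqi
end
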